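/- arXiv:2207.02584 — 5 statements merged into one kernel-verified Lean document; each statement's English description precedes it below -/
import Mathlib

section
/- Let (f(n)) and (g(n)) be strictly increasing sequences of positive integers. For an integer l with 1 ≤ l < N, let J_l(N) denote the number of triples (x,y,z) of integers with 1 ≤ x < x+l ≤ z < y ≤ N satisfying f(x)+f(y) = f(x+l)+f(z) and g(x)+g(y) = g(x+l)+g(z). Then for every ε ∈ (0,1) there exists a constant C(ε) > 0, depending only on ε, such that for all N ≥ 2 the joint additive energy satisfies E(F_N;G_N) ≤ C(ε)·( N^{2+ε} + N^{ε}·Σ_{1 ≤ l ≤ N^{1−ε}} J_l(N) ). -/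
open scoped Classical

/-- Joint additive energy of the first `N` terms of the sequences `f` and `g`. -/
def jointEnergy2 (f g : ℕ → ℕ) (N : ℕ) : ℕ :=
  ((Finset.Icc 1 N ×ˢ Finset.Icc 1 N ×ˢ Finset.Icc 1 N ×ˢ Finset.Icc 1 N).filter fun q =>
    f q.1 + f q.2.1 = f q.2.2.1 + f q.2.2.2 ∧ g q.1 + g q.2.1 = g q.2.2.1 + g q.2.2.2).card

/-- The number of triples `(x, y, z)` with `1 ≤ x < x + l ≤ z < y ≤ N` satisfying
`f x + f y = f (x + l) + f z` and `g x + g y = g (x + l) + g z`. -/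
def Jcount (f g : ℕ → ℕ) (N l : ℕ) : ℕ :=
  ((Finset.Icc 1 N ×ˢ Finset.Icc 1 N ×ˢ Finset.Icc 1 N).filter fun q =>
    q.1 + l ≤ q.2.2 ∧ q.2.2 < q.2.1 ∧
      f q.1 + f q.2.1 = f (q.1 + l) + f q.2.2 ∧
      g q.1 + g q.2.1 = g (q.1 + l) + g q.2.2).card

namespace Stmt8Aux

open Finset

/-- The class map: a pair goes to its pair of sums. -/
def phi (f g : ℕ → ℕ) (p : ℕ × ℕ) : ℕ × ℕ := (f p.1 + f p.2, g p.1 + g p.2)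

def D (N : ℕ) : Finset (ℕ × ℕ) := Finset.Icc 1 N ×ˢ Finset.Icc 1 N

def S (N : ℕ) : Finset (ℕ × ℕ) := (D N).filter fun p => p.1 ≤ p.2

def cls (f g : ℕ → ℕ) (N : ℕ) : Finset (ℕ × ℕ) := (D N).image (phi f g)

def fibO (f g : ℕ → ℕ) (N : ℕ) (c : ℕ × ℕ) : Finset (ℕ × ℕ) :=
  (D N).filter fun p => phi f g p = c

def fibR (f g : ℕ → ℕ) (N : ℕ) (c : ℕ × ℕ) : Finset (ℕ × ℕ) :=
  (S N).filter fun p => phi f g p = c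

def PP (f g : ℕ → ℕ) (N H : ℕ) (c : ℕ × ℕ) : Finset ((ℕ × ℕ) × (ℕ × ℕ)) :=
  ((fibR f g N c) ×ˢ (fibR f g N c)).filter fun x => x.1.1 < x.2.1 ∧ x.2.1 ≤ x.1.1 + H

def sortP (p : ℕ × ℕ) : ℕ × ℕ := if p.1 ≤ p.2 then p else p.swap

lemma sortP_eq_or (p b : ℕ × ℕ) (h : sortP p = b) : p = b ∨ p = b.swap := by
  unfold sortP at h
  split at h
  · exact Or.inl h
  · right; rw [← h]; exact (Prod.swap_swap p).symm

/-- Generic 2-to-1 bound for the sorting map. -/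
lemma card_le_two_mul (s t : Finset (ℕ × ℕ)) (hst : ∀ p ∈ s, sortP p ∈ t) :
    s.card ≤ 2 * t.card := by
  have himg : s.image sortP ⊆ t := by
    intro b hb
    obtain ⟨p, hp, rfl⟩ := Finset.mem_image.mp hb
    exact hst p hp
  have h := Finset.card_le_mul_card_image (f := sortP) s 2 ?_
  · exact h.trans (Nat.mul_le_mul_left 2 (Finset.card_le_card himg))
  · intro b _
    have hsub : (s.filter fun a => sortP a = b) ⊆ {b, b.swap} := by
      intro p hp
      rcases sortP_eq_or p b (Finset.mem_filter.mp hp).2 with h | h <;> simp [h]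
    exact (Finset.card_le_card hsub).trans (by
      refine (Finset.card_insert_le _ _).trans ?_
      simp)

lemma pair_count (s : Finset ℕ) :
    s.card ^ 2 ≤ 2 * ((s ×ˢ s).filter fun p => p.1 < p.2).card + s.card := by
  have hsplit := Finset.card_filter_add_card_filter_not
    (p := fun p : ℕ × ℕ => p.1 = p.2) (s := s ×ˢ s)
  have hdiag : ((s ×ˢ s).filter fun p => p.1 = p.2).card = s.card := by
    apply Finset.card_bij (fun p _ => p.1)
    · intro p hp; simp only [Finset.mem_filter, Finset.mem_product] at hp; exact hp.1.1
    · intro a ha b hb h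
      simp only [Finset.mem_filter] at ha hb
      exact Prod.ext h (by rw [← ha.2, ← hb.2, h])
    · intro a ha
      exact ⟨(a, a), by simp [Finset.mem_filter, Finset.mem_product, ha], rfl⟩
  have hne : ((s ×ˢ s).filter fun p => ¬ p.1 = p.2).card ≤
      2 * ((s ×ˢ s).filter fun p => p.1 < p.2).card := by
    apply card_le_two_mul
    intro p hp
    simp only [Finset.mem_filter, Finset.mem_product] at hp ⊢
    unfold sortP
    split_ifs with hle
    · exact ⟨hp.1, lt_of_le_of_ne hle hp.2⟩
    · refine ⟨?_, ?_⟩ <;> simp only [Prod.fst_swap, Prod.snd_swap]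
      · exact ⟨hp.1.2, hp.1.1⟩
      · omega
  have hcard : (s ×ˢ s).card = s.card ^ 2 := by rw [Finset.card_product, sq]
  omega

/-- Bucket counting lemma: a set `A ⊆ [1, N]` of size `r` has at least
`r^2/K - r` pairs at distance at most `H`, where `K = ⌈N/H⌉`-ish. -/
lemma count_close (N H : ℕ) (hH : 1 ≤ H) (A : Finset ℕ) (hA : A ⊆ Finset.Icc 1 N) :
    A.card ^ 2 ≤ ((N - 1) / H + 1) *
      (2 * ((A ×ˢ A).filter fun p => p.1 < p.2 ∧ p.2 ≤ p.1 + H).card + A.card) := by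
  set K := (N - 1) / H + 1 with hK
  set bkt : ℕ → ℕ := fun a => (a - 1) / H with hbkt
  have himg : (A.image bkt).card ≤ K := by
    have hsub : A.image bkt ⊆ Finset.range K := by
      intro t ht
      obtain ⟨a, ha, rfl⟩ := Finset.mem_image.mp ht
      have haN : a ≤ N := (Finset.mem_Icc.mp (hA ha)).2
      have : (a - 1) / H ≤ (N - 1) / H := Nat.div_le_div_right (by omega)
      simp only [Finset.mem_range, hK, hbkt]
      omega
    exact (Finset.card_le_card hsub).trans (by simp)
  have hcs : A.card ^ 2 ≤ K * ∑ t ∈ A.image bkt, ((A.filter fun a => bkt a = t).card) ^ 2 := by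
    calc A.card ^ 2 = (∑ t ∈ A.image bkt, (A.filter fun a => bkt a = t).card) ^ 2 := by
          rw [← Finset.card_eq_sum_card_image]
      _ ≤ (A.image bkt).card * ∑ t ∈ A.image bkt, ((A.filter fun a => bkt a = t).card) ^ 2 :=
          sq_sum_le_card_mul_sum_sq
      _ ≤ K * _ := Nat.mul_le_mul_right _ himg
  set SB : Finset (ℕ × ℕ) := (A ×ˢ A).filter fun p => p.1 < p.2 ∧ bkt p.1 = bkt p.2 with hSB
  have hfib : ∀ t, (SB.filter fun p => bkt p.1 = t) =
      ((A.filter fun a => bkt a = t) ×ˢ (A.filter fun a => bkt a = t)).filter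
        fun p => p.1 < p.2 := by
    intro t
    ext p
    simp only [hSB, Finset.mem_filter, Finset.mem_product]
    constructor
    · rintro ⟨⟨⟨h1, h2⟩, h3, h4⟩, h5⟩
      exact ⟨⟨⟨h1, h5⟩, h2, by omega⟩, h3⟩
    · rintro ⟨⟨⟨h1, h5⟩, h2, h6⟩, h3⟩
      exact ⟨⟨⟨h1, h2⟩, h3, by omega⟩, h5⟩
  have hSBcard : SB.card = ∑ t ∈ A.image bkt,
      (((A.filter fun a => bkt a = t) ×ˢ (A.filter fun a => bkt a = t)).filter
        fun p => p.1 < p.2).card := by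
    rw [Finset.card_eq_sum_card_fiberwise (f := fun p : ℕ × ℕ => bkt p.1)
      (t := A.image bkt)]
    · exact Finset.sum_congr rfl fun t _ => by rw [hfib]
    · intro p hp
      simp only [hSB, Finset.mem_coe, Finset.mem_filter, Finset.mem_product] at hp
      exact Finset.mem_image_of_mem bkt hp.1.1
  have hsq : ∑ t ∈ A.image bkt, ((A.filter fun a => bkt a = t).card) ^ 2 ≤
      2 * SB.card + A.card := by
    calc ∑ t ∈ A.image bkt, ((A.filter fun a => bkt a = t).card) ^ 2
        ≤ ∑ t ∈ A.image bkt,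
          (2 * (((A.filter fun a => bkt a = t) ×ˢ (A.filter fun a => bkt a = t)).filter
            fun p => p.1 < p.2).card + (A.filter fun a => bkt a = t).card) :=
          Finset.sum_le_sum fun t _ => pair_count _
      _ = 2 * SB.card + A.card := by
          rw [Finset.sum_add_distrib, ← Finset.mul_sum, ← hSBcard,
            ← Finset.card_eq_sum_card_image]
  have hSBsub : SB ⊆ (A ×ˢ A).filter fun p => p.1 < p.2 ∧ p.2 ≤ p.1 + H := by
    intro p hp
    simp only [hSB, Finset.mem_filter, Finset.mem_product] at hp ⊢
    obtain ⟨hmem, hlt, hbe⟩ := hp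
    refine ⟨hmem, hlt, ?_⟩
    have hp1 : 1 ≤ p.1 := (Finset.mem_Icc.mp (hA hmem.1)).1
    have e1 : bkt p.1 * H ≤ p.1 - 1 := Nat.div_mul_le_self _ _
    have e2 : p.2 - 1 < (bkt p.2 + 1) * H := by
      have := (Nat.div_lt_iff_lt_mul (show 0 < H by omega)).mp
        (Nat.lt_succ_self ((p.2 - 1) / H))
      simpa [hbkt] using this
    rw [← hbe, add_mul, one_mul] at e2
    set M := bkt p.1 * H with hM
    omega
  calc A.card ^ 2 ≤ K * ∑ t ∈ A.image bkt, ((A.filter fun a => bkt a = t).card) ^ 2 := hcs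
    _ ≤ K * (2 * SB.card + A.card) := Nat.mul_le_mul_left _ hsq
    _ ≤ K * (2 * ((A ×ˢ A).filter fun p => p.1 < p.2 ∧ p.2 ≤ p.1 + H).card + A.card) := by
        have := Finset.card_le_card hSBsub
        exact Nat.mul_le_mul_left _ (by omega)

variable {f g : ℕ → ℕ}

lemma mem_fibR_iff {N : ℕ} {c p} : p ∈ fibR f g N c ↔
    ((1 ≤ p.1 ∧ p.1 ≤ N) ∧ (1 ≤ p.2 ∧ p.2 ≤ N)) ∧ p.1 ≤ p.2 ∧ phi f g p = c := by
  simp only [fibR, S, D, Finset.mem_filter, Finset.mem_product, Finset.mem_Icc, and_assoc]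

lemma fst_injOn (hf : StrictMono f) {N : ℕ} {c : ℕ × ℕ} :
    ∀ p ∈ fibR f g N c, ∀ q ∈ fibR f g N c, p.1 = q.1 → p = q := by
  intro p hp q hq h
  rw [mem_fibR_iff] at hp hq
  have h1 : f p.1 + f p.2 = f q.1 + f q.2 :=
    congrArg Prod.fst (hp.2.2.trans hq.2.2.symm)
  rw [h] at h1
  have : f p.2 = f q.2 := by omega
  exact Prod.ext h (hf.injective this)

lemma energy_eq (f g : ℕ → ℕ) (N : ℕ) :
    jointEnergy2 f g N = ∑ c ∈ cls f g N, ((fibO f g N c).card) ^ 2 := by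
  have h1 : jointEnergy2 f g N =
      (((D N) ×ˢ (D N)).filter fun x => phi f g x.1 = phi f g x.2).card := by
    unfold jointEnergy2 D phi
    apply Finset.card_bij (fun q _ => ((q.1, q.2.1), (q.2.2.1, q.2.2.2)))
    · intro q hq
      simp only [mem_filter, mem_product] at hq ⊢
      obtain ⟨⟨h1, h2, h3, h4⟩, he1, he2⟩ := hq
      exact ⟨⟨⟨h1, h2⟩, h3, h4⟩, by simp [Prod.ext_iff, he1, he2]⟩
    · intro a ha b hb h
      simp only [Prod.ext_iff] at h
      obtain ⟨⟨h1, h2⟩, h3, h4⟩ := h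
      exact Prod.ext h1 (Prod.ext h2 (Prod.ext h3 h4))
    · intro x hx
      refine ⟨(x.1.1, x.1.2, x.2.1, x.2.2), ?_, rfl⟩
      simp only [mem_filter, mem_product] at hx ⊢
      obtain ⟨⟨⟨h1, h2⟩, h3, h4⟩, he⟩ := hx
      simp only [Prod.ext_iff] at he
      exact ⟨⟨h1, h2, h3, h4⟩, he.1, he.2⟩
  rw [h1, Finset.card_filter, Finset.sum_product]
  have h2 : ∀ p : ℕ × ℕ,
      (∑ q ∈ D N, if phi f g p = phi f g q then 1 else 0) = (fibO f g N (phi f g p)).card := by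
    intro p
    rw [fibO, Finset.card_filter]
    exact Finset.sum_congr rfl fun q _ => by simp [eq_comm]
  calc (∑ p ∈ D N, ∑ q ∈ D N, if phi f g p = phi f g q then 1 else 0)
      = ∑ p ∈ D N, (fibO f g N (phi f g p)).card := Finset.sum_congr rfl fun p _ => h2 p
    _ = ∑ c ∈ cls f g N, ((D N).filter fun p => phi f g p = c).card • (fibO f g N c).card :=
        Finset.sum_comp (fun c => (fibO f g N c).card) (phi f g)
    _ = ∑ c ∈ cls f g N, ((fibO f g N c).card) ^ 2 := by
        refine Finset.sum_congr rfl fun c _ => ?_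
        rw [smul_eq_mul, sq]; rfl

lemma fibO_le_two (f g : ℕ → ℕ) (N : ℕ) (c : ℕ × ℕ) :
    (fibO f g N c).card ≤ 2 * (fibR f g N c).card := by
  apply card_le_two_mul
  intro p hp
  simp only [fibO, D, Finset.mem_filter, Finset.mem_product, Finset.mem_Icc] at hp
  obtain ⟨⟨h1, h2⟩, hc⟩ := hp
  unfold sortP
  split_ifs with hle
  · exact mem_fibR_iff.mpr ⟨⟨h1, h2⟩, hle, hc⟩
  · refine mem_fibR_iff.mpr ⟨⟨?_, ?_⟩, ?_, ?_⟩
    · simpa using h2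
    · simpa using h1
    · simp only [Prod.fst_swap, Prod.snd_swap]; omega
    · rw [← hc]
      simp only [phi, Prod.fst_swap, Prod.snd_swap, Prod.mk.injEq]
      constructor <;> ring

lemma card_closeA (hf : StrictMono f) (N H : ℕ) (c : ℕ × ℕ) :
    ((((fibR f g N c).image Prod.fst) ×ˢ ((fibR f g N c).image Prod.fst)).filter
      fun p => p.1 < p.2 ∧ p.2 ≤ p.1 + H).card = (PP f g N H c).card := by
  symm
  apply Finset.card_bij (fun x _ => (x.1.1, x.2.1))
  · intro x hx
    simp only [PP, Finset.mem_filter, Finset.mem_product] at hx ⊢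
    exact ⟨⟨Finset.mem_image_of_mem _ hx.1.1, Finset.mem_image_of_mem _ hx.1.2⟩, hx.2⟩
  · intro x hx y hy h
    simp only [PP, Finset.mem_filter, Finset.mem_product] at hx hy
    simp only [Prod.ext_iff] at h
    exact Prod.ext (fst_injOn hf _ hx.1.1 _ hy.1.1 h.1) (fst_injOn hf _ hx.1.2 _ hy.1.2 h.2)
  · intro p hp
    simp only [Finset.mem_filter, Finset.mem_product, Finset.mem_image] at hp
    obtain ⟨⟨⟨a, ha, ha1⟩, ⟨b, hb, hb1⟩⟩, h1, h2⟩ := hp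
    refine ⟨(a, b), ?_, by simp [ha1, hb1]⟩
    simp only [PP, Finset.mem_filter, Finset.mem_product]
    exact ⟨⟨ha, hb⟩, by rw [ha1, hb1]; exact h1, by rw [ha1, hb1]; exact h2⟩

/-- Each close pair of sorted pairs in a common class yields a `Jcount` triple,
injectively. -/
lemma sigma_inj (hf : StrictMono f) (N H : ℕ) :
    ∑ c ∈ cls f g N, (PP f g N H c).card ≤ ∑ d ∈ Finset.Icc 1 H, Jcount f g N d := by
  classical
  rw [← Finset.card_sigma]
  have hJ : ∑ d ∈ Finset.Icc 1 H, Jcount f g N d =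
      ((Finset.Icc 1 H).sigma fun d =>
        ((Finset.Icc 1 N ×ˢ Finset.Icc 1 N ×ˢ Finset.Icc 1 N).filter fun q =>
          q.1 + d ≤ q.2.2 ∧ q.2.2 < q.2.1 ∧
            f q.1 + f q.2.1 = f (q.1 + d) + f q.2.2 ∧
            g q.1 + g q.2.1 = g (q.1 + d) + g q.2.2)).card := by
    rw [Finset.card_sigma]; rfl
  rw [hJ]
  apply Finset.card_le_card_of_injOn
    (fun x => ⟨x.2.2.1 - x.2.1.1, (x.2.1.1, x.2.1.2, x.2.2.2)⟩)
  · rintro ⟨c, p, q⟩ hx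
    rw [Finset.mem_coe, Finset.mem_sigma] at hx
    obtain ⟨hc, hpq⟩ := hx
    simp only [PP, Finset.mem_filter, Finset.mem_product] at hpq
    obtain ⟨⟨hp, hq⟩, hlt, hle⟩ := hpq
    rw [mem_fibR_iff] at hp hq
    obtain ⟨⟨⟨hp11, hp1N⟩, hp21, hp2N⟩, hpsort, hpc⟩ := hp
    obtain ⟨⟨⟨hq11, hq1N⟩, hq21, hq2N⟩, hqsort, hqc⟩ := hq
    have hphi : phi f g p = phi f g q := hpc.trans hqc.symm
    simp only [phi, Prod.ext_iff] at hphi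
    obtain ⟨hfe, hge⟩ := hphi
    have hf1 : f p.1 < f q.1 := hf hlt
    have hq2lt : q.2 < p.2 := hf.lt_iff_lt.mp (by omega)
    have hd : p.1 + (q.1 - p.1) = q.1 := by omega
    simp only [Finset.mem_coe, Finset.mem_sigma, Finset.mem_filter, Finset.mem_product, Finset.mem_Icc]
    rw [hd]
    refine ⟨by omega, ⟨by omega, by omega, by omega⟩, by omega, by omega, by omega, by omega⟩
  · rintro ⟨c, p, q⟩ hx ⟨c', p', q'⟩ hy h
    simp only [Finset.coe_sigma, Set.mem_sigma_iff, Finset.mem_coe] at hx hy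
    obtain ⟨hc, hpq⟩ := hx
    obtain ⟨hc', hpq'⟩ := hy
    simp only [PP, Finset.mem_filter, Finset.mem_product] at hpq hpq'
    rw [Sigma.ext_iff] at h
    simp only [heq_eq_eq, Prod.mk.injEq] at h
    obtain ⟨hdeq, ⟨h1, h2, h3⟩⟩ := h
    have hp : p = p' := Prod.ext h1 h2
    have hq1 : q.1 = q'.1 := by
      have := hpq.2.1
      have := hpq'.2.1
      omega
    have hcc : c = c' := by
      have e1 : phi f g p = c := (mem_fibR_iff.mp hpq.1.1).2.2
      have e2 : phi f g p' = c' := (mem_fibR_iff.mp hpq'.1.1).2.2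
      rw [← e1, ← e2, hp]
    subst hcc
    have hq : q = q' := fst_injOn hf _ hpq.1.2 _ hpq'.1.2 hq1
    exact Sigma.ext rfl (heq_of_eq (by rw [hp, hq]))

lemma sum_fibR_le (f g : ℕ → ℕ) (N : ℕ) :
    ∑ c ∈ cls f g N, (fibR f g N c).card ≤ N ^ 2 := by
  have h1 : (S N).card = ∑ c ∈ cls f g N, (fibR f g N c).card := by
    apply Finset.card_eq_sum_card_fiberwise
    intro p hp
    exact Finset.mem_image_of_mem (phi f g) (Finset.filter_subset _ _ hp)
  have h2 : (S N).card ≤ (D N).card := Finset.card_le_card (Finset.filter_subset _ _)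
  have h3 : (D N).card = N ^ 2 := by
    rw [D, Finset.card_product, Nat.card_Icc]
    have : N + 1 - 1 = N := by omega
    rw [this, sq]
  omega

lemma fibR_sq_le (hf : StrictMono f) (N H : ℕ) (hH : 1 ≤ H) (c : ℕ × ℕ) :
    (fibR f g N c).card ^ 2 ≤
      ((N - 1) / H + 1) * (2 * (PP f g N H c).card + (fibR f g N c).card) := by
  set A := (fibR f g N c).image Prod.fst with hA
  have hAcard : A.card = (fibR f g N c).card := by
    apply Finset.card_image_of_injOn
    intro p hp q hq h
    exact fst_injOn hf p hp q hq h
  have hAsub : A ⊆ Finset.Icc 1 N := by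
    intro a ha
    obtain ⟨p, hp, rfl⟩ := Finset.mem_image.mp ha
    have := mem_fibR_iff.mp hp
    exact Finset.mem_Icc.mpr this.1.1
  have := count_close N H hH A hAsub
  rw [hAcard, card_closeA hf N H c] at this
  exact this

/-- The main counting bound, entirely in `ℕ`. -/
lemma main_nat (hf : StrictMono f) (N H : ℕ) (hH : 1 ≤ H) :
    jointEnergy2 f g N ≤
      ((N - 1) / H + 1) * (8 * ∑ d ∈ Finset.Icc 1 H, Jcount f g N d + 4 * N ^ 2) := by
  set K := (N - 1) / H + 1 with hK
  calc jointEnergy2 f g N = ∑ c ∈ cls f g N, ((fibO f g N c).card) ^ 2 := energy_eq f g N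
    _ ≤ ∑ c ∈ cls f g N, 4 * ((fibR f g N c).card) ^ 2 := by
        refine Finset.sum_le_sum fun c _ => ?_
        have h := fibO_le_two f g N c
        nlinarith [h]
    _ ≤ ∑ c ∈ cls f g N, 4 * (K * (2 * (PP f g N H c).card + (fibR f g N c).card)) := by
        refine Finset.sum_le_sum fun c _ => ?_
        exact Nat.mul_le_mul_left 4 (fibR_sq_le hf N H hH c)
    _ = 8 * K * (∑ c ∈ cls f g N, (PP f g N H c).card)
        + 4 * K * (∑ c ∈ cls f g N, (fibR f g N c).card) := by
        rw [Finset.mul_sum, Finset.mul_sum, ← Finset.sum_add_distrib]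
        exact Finset.sum_congr rfl fun c _ => by ring
    _ ≤ 8 * K * (∑ d ∈ Finset.Icc 1 H, Jcount f g N d) + 4 * K * N ^ 2 := by
        have h1 := sigma_inj (g := g) hf N H
        have h2 := sum_fibR_le f g N
        gcongr
    _ = K * (8 * ∑ d ∈ Finset.Icc 1 H, Jcount f g N d + 4 * N ^ 2) := by ring

end Stmt8Aux

theorem stmt8 :
    ∀ ε : ℝ, 0 < ε → ε < 1 →
      ∃ C : ℝ, 0 < C ∧
        ∀ f g : ℕ → ℕ, StrictMono f → StrictMono g → (∀ n, 0 < f n) → (∀ n, 0 < g n) →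
          ∀ N : ℕ, 2 ≤ N →
            (jointEnergy2 f g N : ℝ) ≤
              C * ((N : ℝ) ^ ((2 : ℝ) + ε) +
                (N : ℝ) ^ ε * ∑ l ∈ Finset.Icc 1 ⌊(N : ℝ) ^ ((1 : ℝ) - ε)⌋₊,
                  (Jcount f g N l : ℝ)) := by
  intro ε hε hε1
  refine ⟨24, by norm_num, ?_⟩
  intro f g hf hg _ _ N hN
  set x : ℝ := (N : ℝ) ^ ((1 : ℝ) - ε) with hx
  set H : ℕ := ⌊x⌋₊ with hH
  have hNR : (1 : ℝ) ≤ (N : ℝ) := by exact_mod_cast (by omega : 1 ≤ N)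
  have hNpos : (0 : ℝ) < (N : ℝ) := by linarith
  have hx1 : (1 : ℝ) ≤ x := Real.one_le_rpow hNR (by linarith)
  have hH1 : 1 ≤ H := Nat.le_floor (by exact_mod_cast hx1)
  have hmain := Stmt8Aux.main_nat (f := f) (g := g) hf N H hH1
  set J : ℝ := ∑ l ∈ Finset.Icc 1 H, (Jcount f g N l : ℝ) with hJ
  have hJnn : 0 ≤ J := Finset.sum_nonneg fun l _ => by positivity
  have hNe : (1 : ℝ) ≤ (N : ℝ) ^ ε := Real.one_le_rpow hNR hε.le
  have hHhalf : x / 2 ≤ (H : ℝ) := by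
    have h1 : x - 1 < (H : ℝ) := Nat.sub_one_lt_floor x
    have h2 : (1 : ℝ) ≤ (H : ℝ) := by exact_mod_cast hH1
    rcases le_or_gt x 2 with h | h <;> linarith
  have hHpos : (0 : ℝ) < (H : ℝ) := by linarith
  have hxpos : (0 : ℝ) < x := by linarith
  have hNx : (N : ℝ) / x = (N : ℝ) ^ ε := by
    rw [div_eq_iff (ne_of_gt hxpos), hx, ← Real.rpow_add hNpos]
    norm_num
  have hK : (((N - 1) / H + 1 : ℕ) : ℝ) ≤ 3 * (N : ℝ) ^ ε := by
    have h1 : (((N - 1) / H + 1 : ℕ) : ℝ) ≤ ((N - 1 : ℕ) : ℝ) / (H : ℝ) + 1 := by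
      push_cast
      have := Nat.cast_div_le (α := ℝ) (m := N - 1) (n := H)
      push_cast at this
      linarith
    have h2 : ((N - 1 : ℕ) : ℝ) ≤ (N : ℝ) := by
      have : (N - 1 : ℕ) ≤ N := by omega
      exact_mod_cast this
    have h3 : ((N - 1 : ℕ) : ℝ) / (H : ℝ) ≤ (N : ℝ) / (H : ℝ) := by gcongr
    have h4 : (N : ℝ) / (H : ℝ) ≤ (N : ℝ) / (x / 2) := by
      apply div_le_div_of_nonneg_left hNpos.le (by linarith) hHhalf
    have h5 : (N : ℝ) / (x / 2) = 2 * ((N : ℝ) / x) := by ring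
    rw [hNx] at h5
    linarith
  have hcast : (jointEnergy2 f g N : ℝ) ≤
      (((N - 1) / H + 1 : ℕ) : ℝ) * (8 * J + 4 * (N : ℝ) ^ (2 : ℕ)) := by
    have h := (Nat.cast_le (α := ℝ)).mpr hmain
    have hJc : ((∑ d ∈ Finset.Icc 1 H, Jcount f g N d : ℕ) : ℝ) = J := by
      rw [hJ]; push_cast; rfl
    calc (jointEnergy2 f g N : ℝ) ≤
        ((((N - 1) / H + 1) * (8 * ∑ d ∈ Finset.Icc 1 H, Jcount f g N d + 4 * N ^ 2) : ℕ) : ℝ) :=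
          h
      _ = (((N - 1) / H + 1 : ℕ) : ℝ) * (8 * J + 4 * (N : ℝ) ^ (2 : ℕ)) := by
          rw [← hJc]; push_cast; ring
  have hpow : (N : ℝ) ^ ε * (N : ℝ) ^ (2 : ℕ) = (N : ℝ) ^ ((2 : ℝ) + ε) := by
    rw [Real.rpow_add hNpos, ← Real.rpow_natCast (N : ℝ) 2]
    push_cast
    ring
  have hK' : (((N - 1) / H + 1 : ℕ) : ℝ) * (8 * J + 4 * (N : ℝ) ^ (2 : ℕ)) ≤
      3 * (N : ℝ) ^ ε * (8 * J + 4 * (N : ℝ) ^ (2 : ℕ)) := by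
    apply mul_le_mul_of_nonneg_right hK
    positivity
  calc (jointEnergy2 f g N : ℝ) ≤ 3 * (N : ℝ) ^ ε * (8 * J + 4 * (N : ℝ) ^ (2 : ℕ)) :=
        hcast.trans hK'
    _ = 24 * ((N : ℝ) ^ ε * J) + 12 * ((N : ℝ) ^ ε * (N : ℝ) ^ (2 : ℕ)) := by ring
    _ ≤ 24 * ((N : ℝ) ^ ((2 : ℝ) + ε) + (N : ℝ) ^ ε * J) := by
        rw [hpow]
        have : (0 : ℝ) ≤ (N : ℝ) ^ ((2 : ℝ) + ε) := by positivity
        have : (0 : ℝ) ≤ (N : ℝ) ^ ε * J := by positivity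
        linarith [Real.rpow_nonneg hNpos.le ((2 : ℝ) + ε)]
end

section
/- There exists an absolute constant C > 0 with the following property. Let N ≥ 2 and 1 ≤ l < N be integers, and let F : ℝ → ℝ be three times continuously differentiable on the segment [1,N] with F′(x) > 0, F″(x) > 0 and F‴(x) < 0 for all x ∈ [1,N]. Then the number of pairs (n,m) of integers with 1 ≤ n < n+l ≤ m < m+l ≤ N satisfying ⌊F(n)⌋ + ⌊F(m+l)⌋ = ⌊F(n+l)⌋ + ⌊F(m)⌋ is at most C·N·( 2/(l·F″(N)) + 1 ). -/
open scoped Classical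

theorem stmt9 :
    ∃ C : ℝ, 0 < C ∧
      ∀ (N l : ℕ), 2 ≤ N → 1 ≤ l → l < N →
        ∀ F : ℝ → ℝ, ContDiffOn ℝ 3 F (Set.Icc 1 N) →
          (∀ x ∈ Set.Icc (1 : ℝ) N, 0 < deriv F x) →
          (∀ x ∈ Set.Icc (1 : ℝ) N, 0 < iteratedDeriv 2 F x) →
          (∀ x ∈ Set.Icc (1 : ℝ) N, iteratedDeriv 3 F x < 0) →
          (((Finset.Icc 1 N ×ˢ Finset.Icc 1 N).filter fun p =>
              p.1 + l ≤ p.2 ∧ p.2 + l ≤ N ∧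
                ⌊F p.1⌋ + ⌊F ((p.2 : ℝ) + l)⌋ = ⌊F ((p.1 : ℝ) + l)⌋ + ⌊F p.2⌋).card : ℝ) ≤
            C * N * (2 / (l * iteratedDeriv 2 F N) + 1) := by
  refine ⟨1, one_pos, ?_⟩
  intro N l hN hl hlN F hC h1 h2 h3
  have e2 : iteratedDeriv 2 F = deriv (deriv F) := by
    rw [show (2:ℕ) = 1 + 1 from rfl, iteratedDeriv_succ, iteratedDeriv_one]
  have e3 : iteratedDeriv 3 F = deriv (deriv (deriv F)) := by
    rw [show (3:ℕ) = 2 + 1 from rfl, iteratedDeriv_succ, e2]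
  rw [e2]
  have hN1 : (1:ℝ) ≤ (N:ℝ) := by exact_mod_cast Nat.one_le_of_lt hN
  have hl1 : (1:ℝ) ≤ (l:ℝ) := by exact_mod_cast hl
  have hlN' : (l:ℝ) + 1 ≤ (N:ℝ) := by exact_mod_cast hlN
  have hNmem : (N:ℝ) ∈ Set.Icc (1:ℝ) N := ⟨hN1, le_refl _⟩
  set c : ℝ := deriv (deriv F) N with hcdef
  have hc : 0 < c := by have := h2 N hNmem; rwa [e2] at this
  have hdF : ∀ x ∈ Set.Icc (1:ℝ) N, DifferentiableAt ℝ F x := by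
    intro x hx
    by_contra h
    have h0 := deriv_zero_of_not_differentiableAt h
    have := h1 x hx; rw [h0] at this; linarith
  have hdF2 : ∀ x ∈ Set.Icc (1:ℝ) N, DifferentiableAt ℝ (deriv F) x := by
    intro x hx
    by_contra h
    have h0 := deriv_zero_of_not_differentiableAt h
    have := h2 x hx; rw [e2, h0] at this; linarith
  have hdF3 : ∀ x ∈ Set.Icc (1:ℝ) N, DifferentiableAt ℝ (deriv (deriv F)) x := by
    intro x hx
    by_contra h
    have h0 := deriv_zero_of_not_differentiableAt h
    have := h3 x hx; rw [e3, h0] at this; linarith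
  -- deriv (deriv F) is antitone on [1,N]
  have hcont2 : ContinuousOn (deriv (deriv F)) (Set.Icc 1 (N:ℝ)) :=
    fun x hx => (hdF3 x hx).continuousAt.continuousWithinAt
  have hanti : AntitoneOn (deriv (deriv F)) (Set.Icc 1 (N:ℝ)) := by
    apply antitoneOn_of_deriv_nonpos (convex_Icc 1 (N:ℝ)) hcont2
    · intro x hx
      rw [interior_Icc] at hx
      exact (hdF3 x (Set.Ioo_subset_Icc_self hx)).differentiableWithinAt
    · intro x hx
      rw [interior_Icc] at hx
      have := h3 x (Set.Ioo_subset_Icc_self hx); rw [e3] at this; linarith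
  -- χ monotone
  have hχ : MonotoneOn (fun x => deriv F x - x * c) (Set.Icc 1 (N:ℝ)) := by
    apply monotoneOn_of_deriv_nonneg (convex_Icc 1 (N:ℝ))
    · exact fun x hx => ((hdF2 x hx).continuousAt.sub
        ((continuousAt_id.mul continuousAt_const))).continuousWithinAt
    · intro x hx
      rw [interior_Icc] at hx
      exact ((hdF2 x (Set.Ioo_subset_Icc_self hx)).sub
        (differentiableAt_id.mul_const c)).differentiableWithinAt
    · intro x hx
      rw [interior_Icc] at hx
      have hx' := Set.Ioo_subset_Icc_self hx
      have hd : HasDerivAt (fun x => deriv F x - x * c) (deriv (deriv F) x - c) x := by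
        have h := ((hdF2 x hx').hasDerivAt).sub ((hasDerivAt_id x).mul_const c)
        exact h.congr_deriv (by ring)
      rw [hd.deriv]
      have := hanti hx' hNmem hx'.2
      linarith
  -- ψ monotone
  have hsub : ∀ x ∈ Set.Icc (1:ℝ) ((N:ℝ) - l),
      x ∈ Set.Icc (1:ℝ) N ∧ x + l ∈ Set.Icc (1:ℝ) N := by
    intro x hx
    obtain ⟨hx1, hx2⟩ := hx
    constructor
    · exact ⟨hx1, by linarith⟩
    · exact ⟨by linarith, by linarith⟩
  have hψ : MonotoneOn (fun x => F (x + l) - F x - x * ((l:ℝ) * c))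
      (Set.Icc 1 ((N:ℝ) - l)) := by
    apply monotoneOn_of_deriv_nonneg (convex_Icc 1 ((N:ℝ) - l))
    · apply ContinuousOn.sub
      apply ContinuousOn.sub
      · apply ContinuousOn.comp (fun x hx => (hdF x hx).continuousAt.continuousWithinAt)
          ((continuous_id.add continuous_const).continuousOn)
        intro x hx; exact (hsub x hx).2
      · exact fun x hx => ((hdF x (hsub x hx).1).continuousAt).continuousWithinAt
      · exact (continuous_id.mul continuous_const).continuousOn
    · intro x hx
      rw [interior_Icc] at hx
      have hx' := Set.Ioo_subset_Icc_self hx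
      obtain ⟨hm1, hm2⟩ := hsub x hx'
      have hd1 : DifferentiableAt ℝ (fun y => F (y + l)) x := by
        have h := ((hdF (x + l) hm2).hasDerivAt).comp x ((hasDerivAt_id x).add_const (l:ℝ))
        exact h.differentiableAt
      exact ((hd1.sub (hdF x hm1)).sub (differentiableAt_id.mul_const _)).differentiableWithinAt
    · intro x hx
      rw [interior_Icc] at hx
      have hx' := Set.Ioo_subset_Icc_self hx
      obtain ⟨hm1, hm2⟩ := hsub x hx'
      have hd1 : HasDerivAt (fun y => F (y + l)) (deriv F (x + l)) x := by
        have h := ((hdF (x + l) hm2).hasDerivAt).comp x ((hasDerivAt_id x).add_const (l:ℝ))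
        exact h.congr_deriv (by ring)
      have hd : HasDerivAt (fun x => F (x + l) - F x - x * ((l:ℝ) * c))
          (deriv F (x + l) - deriv F x - (l:ℝ) * c) x := by
        have h := (hd1.sub (hdF x hm1).hasDerivAt).sub ((hasDerivAt_id x).mul_const ((l:ℝ) * c))
        exact h.congr_deriv (by ring)
      rw [hd.deriv]
      have hxl : x + l ∈ Set.Icc (1:ℝ) N := hm2
      have hle : x ≤ x + l := by linarith
      have hmon := hχ hm1 hxl hle
      have hring : (x + (l:ℝ)) * c = x * c + (l:ℝ) * c := by ring
      simp only at hmon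
      linarith [hmon, hring]
  -- key inequality
  have hkey : ∀ a b : ℝ, a ∈ Set.Icc (1:ℝ) ((N:ℝ) - l) → b ∈ Set.Icc (1:ℝ) ((N:ℝ) - l) →
      a ≤ b → (b - a) * ((l:ℝ) * c) ≤ (F (b + l) - F b) - (F (a + l) - F a) := by
    intro a b ha hb hab
    have := hψ ha hb hab
    simp only at this
    nlinarith [this]
  -- counting
  set K : ℝ := (l:ℝ) * c with hKdef
  have hK : 0 < K := mul_pos (by linarith) hc
  set t : ℕ := ⌊2 / K⌋₊ with htdef
  set S := (Finset.Icc 1 N ×ˢ Finset.Icc 1 N).filter fun p : ℕ × ℕ =>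
      p.1 + l ≤ p.2 ∧ p.2 + l ≤ N ∧
        ⌊F p.1⌋ + ⌊F ((p.2 : ℝ) + l)⌋ = ⌊F ((p.1 : ℝ) + l)⌋ + ⌊F p.2⌋ with hSdef
  have hpair : ∀ p : ℕ × ℕ, p ∈ S → p.1 + 1 ≤ p.2 ∧ p.2 - p.1 ≤ t := by
    intro p hp
    simp only [hSdef, Finset.mem_filter, Finset.mem_product, Finset.mem_Icc] at hp
    obtain ⟨⟨⟨hn1, hn2⟩, hm1, hm2⟩, hnlm, hmlN, hfloor⟩ := hp
    set n := p.1
    set m := p.2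
    have hnm : n + 1 ≤ m := by omega
    -- real memberships
    have hnml : n + l ≤ N := by omega
    have ha : (n:ℝ) ∈ Set.Icc (1:ℝ) ((N:ℝ) - l) := by
      constructor
      · exact_mod_cast hn1
      · have : (n:ℝ) + l ≤ N := by exact_mod_cast hnml
        linarith
    have hb : (m:ℝ) ∈ Set.Icc (1:ℝ) ((N:ℝ) - l) := by
      constructor
      · exact_mod_cast hm1
      · have : (m:ℝ) + l ≤ N := by exact_mod_cast hmlN
        linarith
    have hab : (n:ℝ) ≤ (m:ℝ) := by exact_mod_cast (by omega : n ≤ m)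
    have hkey' := hkey n m ha hb hab
    -- floor bounds
    have hfe : (⌊F n⌋ : ℝ) + (⌊F ((m:ℝ) + l)⌋ : ℝ) = (⌊F ((n:ℝ) + l)⌋ : ℝ) + (⌊F m⌋ : ℝ) := by
      exact_mod_cast congrArg (fun z : ℤ => (z : ℝ)) hfloor
    have b1 := Int.floor_le (F ((m:ℝ)))
    have b2 := Int.lt_floor_add_one (F ((m:ℝ) + l))
    have b3 := Int.floor_le (F ((n:ℝ) + l))
    have b4 := Int.lt_floor_add_one (F ((n:ℝ)))
    have hlt2 : ((m:ℝ) - n) * K < 2 := by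
      have : (F ((m:ℝ) + l) - F m) - (F ((n:ℝ) + l) - F n) < 2 := by linarith
      linarith [hkey']
    have hdiv : ((m:ℝ) - n) < 2 / K := (lt_div_iff₀ hK).mpr hlt2
    have hcast : ((m - n : ℕ) : ℝ) = (m:ℝ) - n := by
      have : n ≤ m := by omega
      push_cast [this]; ring
    have : (m - n : ℕ) ≤ t := by
      apply Nat.le_floor
      rw [hcast]
      exact le_of_lt hdiv
    exact ⟨hnm, this⟩
  have hcard : S.card ≤ (Finset.Icc 1 N ×ˢ Finset.Icc 1 t).card := by
    apply Finset.card_le_card_of_injOn (fun p => (p.1, p.2 - p.1))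
    · intro p hp
      have hps := hpair p hp
      simp only [hSdef, Finset.mem_coe, Finset.mem_filter, Finset.mem_product, Finset.mem_Icc] at hp
      simp only [Finset.mem_coe, Finset.mem_product, Finset.mem_Icc]
      exact ⟨hp.1.1, by omega, hps.2⟩
    · intro p hp q hq hfe
      have hp1 := (hpair p hp).1
      have hq1 := (hpair q hq).1
      simp only [Prod.mk.injEq] at hfe
      obtain ⟨e1, e2⟩ := hfe
      have : p.2 = q.2 := by omega
      exact Prod.ext e1 this
  have hcardT : (Finset.Icc 1 N ×ˢ Finset.Icc 1 t).card = N * t := by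
    rw [Finset.card_product, Nat.card_Icc, Nat.card_Icc, Nat.add_sub_cancel, Nat.add_sub_cancel]
  have ht : (t:ℝ) ≤ 2 / K := Nat.floor_le (by positivity)
  have hNS : (S.card : ℝ) ≤ (N:ℝ) * t := by
    rw [hcardT] at hcard
    exact_mod_cast hcard
  calc (S.card : ℝ) ≤ (N:ℝ) * t := hNS
    _ ≤ (N:ℝ) * (2 / K) := by
        apply mul_le_mul_of_nonneg_left ht (by linarith)
    _ ≤ 1 * (N:ℝ) * (2 / K + 1) := by nlinarith [hN1]
end

section
/- For every ε ∈ (0,1) there exists a constant C(ε) > 0, depending only on ε, with the following property. Let N ≥ 2 be an integer and let F : ℝ → ℝ be three times continuously differentiable on the segment [1,N] with F′(x) > 0, F″(x) > 0 and F‴(x) < 0 for all x ∈ [1,N]. Then #{(n,m,k,l) ∈ {1,…,N}^4 : n + m = k + l and ⌊F(n)⌋ + ⌊F(m)⌋ = ⌊F(k)⌋ + ⌊F(l)⌋} ≤ C(ε)·( N^{2+ε} + N^{1+ε}·(log N)/F″(N) ). -/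
open scoped Classical

lemma aux_slope {g : ℝ → ℝ} {a b m : ℝ} (hab : a ≤ b)
    (hg : ∀ x ∈ Set.Icc a b, DifferentiableAt ℝ g x)
    (hm : ∀ x ∈ Set.Icc a b, m ≤ deriv g x) :
    m * (b - a) ≤ g b - g a := by
  have key : MonotoneOn (fun x => g x - m * x) (Set.Icc a b) := by
    apply monotoneOn_of_deriv_nonneg (convex_Icc a b)
    · exact fun x hx =>
        (((hg x hx).sub (by fun_prop)).continuousAt).continuousWithinAt
    · intro x hx
      rw [interior_Icc] at hx
      exact ((hg x (Set.Ioo_subset_Icc_self hx)).sub (by fun_prop)).differentiableWithinAt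
    · intro x hx
      rw [interior_Icc] at hx
      have h1 := hm x (Set.Ioo_subset_Icc_self hx)
      rw [deriv_fun_sub (hg x (Set.Ioo_subset_Icc_self hx)) (by fun_prop)]
      have h2 : deriv (fun y => m * y) x = m := by
        simpa using ((hasDerivAt_id x).const_mul m).deriv
      rw [h2]; linarith
  have h := key (Set.left_mem_Icc.mpr hab) (Set.right_mem_Icc.mpr hab) hab
  simp only at h
  linarith

/-- convexity gap lemma -/
lemma aux_convex {F : ℝ → ℝ} {R B : ℝ}
    (hdF : ∀ x ∈ Set.Icc 1 R, DifferentiableAt ℝ F x)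
    (hd2 : ∀ x ∈ Set.Icc 1 R, DifferentiableAt ℝ (deriv F) x)
    (h2B : ∀ x ∈ Set.Icc 1 R, B ≤ deriv (deriv F) x)
    {s n k : ℝ} (h1 : 1 ≤ s - k) (h2 : k ≤ R) (h3 : n ≤ k) (h4 : s ≤ n + k) :
    B * ((k - n) * (n + k - s)) ≤ (F k + F (s - k)) - (F n + F (s - n)) := by
  set e := n + k - s with he
  have hsub : ∀ x y : ℝ, 1 ≤ x → y ≤ R → x ≤ y → B * (y - x) ≤ deriv F y - deriv F x := by
    intro x y hx hy hxy
    have := aux_slope (g := deriv F) (m := B) hxy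
      (fun z hz => hd2 z ⟨le_trans hx hz.1, le_trans hz.2 hy⟩)
      (fun z hz => h2B z ⟨le_trans hx hz.1, le_trans hz.2 hy⟩)
    linarith
  have hskn : s - k ≤ s - n := by linarith
  have hsk1 : (1:ℝ) ≤ s - k := h1
  have he0 : 0 ≤ e := by rw [he]; linarith
  -- g u = F (u + e) - F u on [s-k, s-n]
  have key := aux_slope (g := fun u => F (u + e) - F u) (m := B * e) (a := s - k) (b := s - n)
    hskn ?_ ?_
  · have e1 : s - n + e = k := by rw [he]; ring
    have e2 : s - k + e = n := by rw [he]; ring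
    simp only [e1, e2] at key
    calc B * ((k - n) * (n + k - s)) = B * e * (s - n - (s - k)) := by rw [he]; ring
      _ ≤ (F k - F (s - n)) - (F n - F (s - k)) := key
      _ = (F k + F (s - k)) - (F n + F (s - n)) := by ring
  · intro u hu
    have hu1 : u ∈ Set.Icc (1:ℝ) R := ⟨le_trans hsk1 hu.1, by linarith [hu.2, h3, h2]⟩
    have hue : u + e ∈ Set.Icc (1:ℝ) R := by
      constructor
      · linarith [hu.1, he0, hsk1]
      · have : u + e ≤ s - n + e := by linarith [hu.2]
        rw [he] at this; linarith
    have hc : DifferentiableAt ℝ (fun u => F (u + e)) u :=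
      DifferentiableAt.comp u (hdF (u + e) hue) (differentiableAt_id.add_const e)
    exact hc.sub (hdF u hu1)
  · intro u hu
    have hu1 : u ∈ Set.Icc (1:ℝ) R := ⟨le_trans hsk1 hu.1, by linarith [hu.2, h3, h2]⟩
    have hue : u + e ∈ Set.Icc (1:ℝ) R := by
      constructor
      · linarith [hu.1, he0, hsk1]
      · have : u + e ≤ s - n + e := by linarith [hu.2]
        rw [he] at this; linarith
    have hd : deriv (fun u => F (u + e) - F u) u = deriv F (u + e) - deriv F u := by
      have hc : DifferentiableAt ℝ (fun u => F (u + e)) u :=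
        DifferentiableAt.comp u (hdF (u + e) hue) (differentiableAt_id.add_const e)
      rw [deriv_fun_sub hc (hdF u hu1)]
      congr 1
      exact deriv_comp_add_const F e u
    rw [hd]
    have := hsub u (u + e) hu1.1 hue.2 (by linarith)
    linarith

lemma aux_harm (M : ℕ) : ∑ w ∈ Finset.Icc 1 M, ((w:ℝ))⁻¹ ≤ 1 + Real.log M := by
  have h := harmonic_le_one_add_log M
  have e : ((harmonic M : ℚ) : ℝ) = ∑ w ∈ Finset.Icc 1 M, ((w:ℝ))⁻¹ := by
    rw [harmonic_eq_sum_Icc]; push_cast; rfl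
  linarith [e ▸ h]

noncomputable def phiR (F : ℝ → ℝ) (s x : ℕ) : ℝ := F x + F ((s:ℝ) - x)

noncomputable def Uset (F : ℝ → ℝ) (N : ℕ) : Finset (ℕ × ℕ × ℕ) :=
  ((Finset.Icc 2 (2*N)) ×ˢ (Finset.Icc 1 N) ×ˢ (Finset.Icc 1 N)).filter
    (fun t => t.1 ≤ 2 * t.2.1 ∧ t.2.2 + 1 ≤ t.1 ∧ t.2.1 ≤ t.2.2 ∧
      |phiR F t.1 t.2.1 - phiR F t.1 t.2.2| < 2)

lemma stepB (F : ℝ → ℝ) (N : ℕ) (B : ℝ) (hB : 0 < B)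
    (hkey : ∀ s u v : ℕ, v + 1 ≤ s → v ≤ N → u ≤ v → s ≤ 2*u →
      B * (((v:ℝ) - u) * ((u:ℝ) + v - s)) ≤ phiR F s v - phiR F s u) :
    ((Uset F N).card : ℝ) ≤
      (2*N) * ((2/B) * (1 + Real.log ((2*N : ℕ))) + 2*N) := by
  classical
  have hcard : (Uset F N).card = ∑ p ∈ (Finset.Icc 2 (2*N)) ×ˢ (Finset.Icc 1 N),
      ((Uset F N).filter (fun t => (t.1, t.2.1) = p)).card := by
    apply Finset.card_eq_sum_card_fiberwise
    intro t ht
    simp only [Uset, Finset.mem_coe, Finset.mem_filter, Finset.mem_product, Finset.mem_Icc] at ht ⊢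
    exact ⟨ht.1.1, ht.1.2.1⟩
  set c : ℕ × ℕ → ℝ := fun p => if p.1 < 2*p.2 then 2/(B*((2*p.2 - p.1 : ℕ):ℝ)) + 1
      else if p.1 = 2*p.2 then (N:ℝ) else 0 with hc
  have hfib : ∀ p ∈ (Finset.Icc 2 (2*N)) ×ˢ (Finset.Icc 1 N),
      (((Uset F N).filter (fun t => (t.1, t.2.1) = p)).card : ℝ) ≤ c p := by
    intro p hp
    obtain ⟨s, u⟩ := p
    simp only [Finset.mem_product, Finset.mem_Icc] at hp
    set W := (Finset.Icc 1 N).filter (fun v => s ≤ 2*u ∧ v + 1 ≤ s ∧ u ≤ v ∧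
          |phiR F s u - phiR F s v| < 2) with hW
    have hinj : ((Uset F N).filter (fun t => (t.1, t.2.1) = (s,u))).card ≤ W.card := by
      apply Finset.card_le_card_of_injOn (fun t => t.2.2)
      · intro t ht
        simp only [Uset, Finset.mem_coe, Finset.mem_filter, Finset.mem_product, Finset.mem_Icc] at ht
        obtain ⟨⟨hbase, hcond⟩, heq⟩ := ht
        have h1 : t.1 = s := congrArg Prod.fst heq
        have h2 : t.2.1 = u := congrArg Prod.snd heq
        simp only [hW, Finset.mem_coe, Finset.mem_filter, Finset.mem_Icc]
        refine ⟨hbase.2.2, ?_⟩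
        rw [← h1, ← h2]
        exact hcond
      · intro t1 h1 t2 h2 he
        simp only [Finset.mem_coe, Finset.mem_filter] at h1 h2
        have e1 := Prod.ext_iff.mp h1.2
        have e2 := Prod.ext_iff.mp h2.2
        exact Prod.ext (e1.1.trans e2.1.symm) (Prod.ext (e1.2.trans e2.2.symm) he)
    have hWb : (W.card : ℝ) ≤ c (s, u) := by
      by_cases hlt : s < 2*u
      · set w := 2*u - s with hwdef
        have hw1 : 1 ≤ w := by omega
        have hwc : ((w:ℕ):ℝ) = 2*(u:ℝ) - (s:ℝ) := by
          rw [hwdef, Nat.cast_sub (by omega)]; push_cast; ring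
        have hwpos : (0:ℝ) < ((w:ℕ):ℝ) := by
          rw [hwc]
          have : (s:ℝ) < 2*(u:ℝ) := by exact_mod_cast hlt
          linarith
        set D := ⌊2/(B*((w:ℕ):ℝ))⌋₊ with hD
        have hWsub : W ⊆ Finset.Icc u (u + D) := by
          intro v hv
          simp only [hW, Finset.mem_filter, Finset.mem_Icc] at hv
          obtain ⟨⟨hv1, hv2⟩, h2u, hvs, huv, habs⟩ := hv
          have hk := hkey s u v hvs hv2 huv h2u
          have habs' : phiR F s v - phiR F s u < 2 := by
            have := abs_lt.mp habs; linarith [this.1]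
          have hvu : (0:ℝ) ≤ (v:ℝ) - u := by
            have : (u:ℝ) ≤ v := by exact_mod_cast huv
            linarith
          have hstep : B * (((v:ℝ)-u) * ((w:ℕ):ℝ)) ≤ B * (((v:ℝ)-u)*((u:ℝ)+v-s)) := by
            apply mul_le_mul_of_nonneg_left _ (le_of_lt hB)
            apply mul_le_mul_of_nonneg_left _ hvu
            rw [hwc]
            have : (u:ℝ) ≤ v := by exact_mod_cast huv
            linarith
          have hlt2 : B * (((v:ℝ)-u) * ((w:ℕ):ℝ)) < 2 := lt_of_le_of_lt (hstep.trans hk) habs'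
          have hdiv : ((v:ℝ) - u) < 2/(B*((w:ℕ):ℝ)) := by
            rw [lt_div_iff₀ (mul_pos hB hwpos)]
            nlinarith [hlt2]
          have hvD : v - u ≤ D := by
            apply Nat.le_floor
            rw [Nat.cast_sub huv]
            exact le_of_lt hdiv
          simp only [Finset.mem_Icc]
          omega
        have hcval : c (s,u) = 2/(B*((w:ℕ):ℝ)) + 1 := by
          rw [hc]; simp only [if_pos hlt]; rfl
        rw [hcval]
        calc (W.card:ℝ) ≤ ((Finset.Icc u (u + D)).card : ℝ) := by
              exact_mod_cast Finset.card_le_card hWsub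
          _ = ((D + 1 : ℕ) : ℝ) := by rw [Nat.card_Icc]; congr 1; omega
          _ ≤ 2/(B*((w:ℕ):ℝ)) + 1 := by
              push_cast
              have := Nat.floor_le (show (0:ℝ) ≤ 2/(B*((w:ℕ):ℝ)) by positivity)
              rw [← hD] at this
              linarith
      · by_cases heq2 : s = 2*u
        · have hcval : c (s,u) = (N:ℝ) := by
            rw [hc]; simp only [if_neg hlt, if_pos heq2]
          rw [hcval]
          calc (W.card:ℝ) ≤ ((Finset.Icc 1 N).card : ℝ) := by
                exact_mod_cast Finset.card_le_card (Finset.filter_subset _ _)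
            _ = (N:ℝ) := by simp [Nat.card_Icc]
        · have hWe : W = ∅ := by
            apply Finset.eq_empty_of_forall_notMem
            intro v hv
            simp only [hW, Finset.mem_filter, Finset.mem_Icc] at hv
            omega
          rw [hWe]
          have hcval : c (s,u) = 0 := by
            rw [hc]; simp only [if_neg hlt, if_neg heq2]
          rw [hcval]; simp
    calc (((Uset F N).filter (fun t => (t.1, t.2.1) = (s,u))).card : ℝ) ≤ (W.card : ℝ) := by
          exact_mod_cast hinj
      _ ≤ c (s, u) := hWb
  -- sum the fiber bounds
  have hsum1 : ((Uset F N).card : ℝ) ≤ ∑ p ∈ (Finset.Icc 2 (2*N)) ×ˢ (Finset.Icc 1 N), c p := by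
    rw [hcard]
    push_cast
    exact Finset.sum_le_sum hfib
  have hinner : ∀ s ∈ Finset.Icc 2 (2*N),
      ∑ u ∈ Finset.Icc 1 N, c (s,u) ≤ (2/B) * (1 + Real.log ((2*N : ℕ))) + 2*N := by
    intro s hs
    simp only [Finset.mem_Icc] at hs
    have hle : ∀ u ∈ Finset.Icc 1 N, c (s,u) ≤
        (2/B) * (if s < 2*u then ((2*u - s:ℕ):ℝ)⁻¹ else 0) + (if s = 2*u then (N:ℝ) else 0) + 1 := by
      intro u hu
      rw [hc]; simp only
      by_cases h1 : s < 2*u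
      · rw [if_pos h1, if_pos h1, if_neg (by omega)]
        have hh : 2/(B*((2*u-s:ℕ):ℝ)) = (2/B) * ((2*u-s:ℕ):ℝ)⁻¹ := by
          rw [div_mul_eq_div_div, div_eq_mul_inv]
        rw [hh]; linarith
      · rw [if_neg h1, if_neg h1]
        by_cases h2 : s = 2*u
        · rw [if_pos h2]
          have : (2/B) * (0:ℝ) = 0 := by ring
          rw [this]; linarith
        · rw [if_neg h2]
          have : (2/B) * (0:ℝ) = 0 := by ring
          rw [this]; norm_num
    have hb1 : ∑ u ∈ Finset.Icc 1 N, (if s < 2*u then ((2*u - s:ℕ):ℝ)⁻¹ else 0)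
        ≤ 1 + Real.log ((2*N : ℕ)) := by
      rw [Finset.sum_ite, Finset.sum_const, smul_zero, add_zero]
      have himg : ∑ u ∈ (Finset.Icc 1 N).filter (fun u => s < 2*u), ((2*u - s:ℕ):ℝ)⁻¹
          = ∑ w ∈ ((Finset.Icc 1 N).filter (fun u => s < 2*u)).image (fun u => 2*u - s),
              ((w:ℕ):ℝ)⁻¹ := by
        rw [Finset.sum_image]
        intro a ha b hb hab
        simp only [Finset.mem_coe, Finset.mem_filter, Finset.mem_Icc] at ha hb hab
        omega
      rw [himg]
      have hss : ((Finset.Icc 1 N).filter (fun u => s < 2*u)).image (fun u => 2*u - s)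
          ⊆ Finset.Icc 1 (2*N) := by
        intro w hw
        simp only [Finset.mem_image, Finset.mem_filter, Finset.mem_Icc] at hw ⊢
        obtain ⟨a, ⟨⟨ha1, ha2⟩, ha3⟩, rfl⟩ := hw
        omega
      calc _ ≤ ∑ w ∈ Finset.Icc 1 (2*N), ((w:ℕ):ℝ)⁻¹ :=
            Finset.sum_le_sum_of_subset_of_nonneg hss (by intro i _ _; positivity)
        _ ≤ 1 + Real.log ((2*N : ℕ)) := aux_harm (2*N)
    have hb2 : ∑ u ∈ Finset.Icc 1 N, (if s = 2*u then (N:ℝ) else 0) ≤ (N:ℝ) := by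
      rw [Finset.sum_ite, Finset.sum_const, Finset.sum_const, smul_zero, add_zero]
      have hcard1 : ((Finset.Icc 1 N).filter (fun u => s = 2*u)).card ≤ 1 := by
        apply Finset.card_le_one.mpr
        intro a ha b hb
        simp only [Finset.mem_filter, Finset.mem_Icc] at ha hb
        omega
      calc (((Finset.Icc 1 N).filter (fun u => s = 2*u)).card : ℕ) • (N:ℝ)
          = (((Finset.Icc 1 N).filter (fun u => s = 2*u)).card : ℝ) * N := by
            rw [nsmul_eq_mul]
        _ ≤ 1 * (N:ℝ) := by
            apply mul_le_mul_of_nonneg_right _ (Nat.cast_nonneg N)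
            exact_mod_cast hcard1
        _ = (N:ℝ) := one_mul _
    calc ∑ u ∈ Finset.Icc 1 N, c (s,u)
        ≤ ∑ u ∈ Finset.Icc 1 N, ((2/B) * (if s < 2*u then ((2*u - s:ℕ):ℝ)⁻¹ else 0)
            + (if s = 2*u then (N:ℝ) else 0) + 1) := Finset.sum_le_sum hle
      _ = (2/B) * (∑ u ∈ Finset.Icc 1 N, (if s < 2*u then ((2*u - s:ℕ):ℝ)⁻¹ else 0))
            + (∑ u ∈ Finset.Icc 1 N, (if s = 2*u then (N:ℝ) else 0)) + N := by
          rw [Finset.sum_add_distrib, Finset.sum_add_distrib, ← Finset.mul_sum,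
            Finset.sum_const, Nat.card_Icc]
          simp only [nsmul_eq_mul, mul_one]
          congr 1
      _ ≤ (2/B) * (1 + Real.log ((2*N : ℕ))) + N + N := by
          have h2B : (0:ℝ) ≤ 2/B := by positivity
          have := mul_le_mul_of_nonneg_left hb1 h2B
          linarith
      _ = (2/B) * (1 + Real.log ((2*N : ℕ))) + 2*N := by ring
  calc ((Uset F N).card : ℝ)
      ≤ ∑ p ∈ (Finset.Icc 2 (2*N)) ×ˢ (Finset.Icc 1 N), c p := hsum1
    _ = ∑ s ∈ Finset.Icc 2 (2*N), ∑ u ∈ Finset.Icc 1 N, c (s,u) := by rw [Finset.sum_product]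
    _ ≤ ∑ s ∈ Finset.Icc 2 (2*N), ((2/B) * (1 + Real.log ((2*N : ℕ))) + 2*N) :=
        Finset.sum_le_sum hinner
    _ = ((Finset.Icc 2 (2*N)).card : ℝ) * ((2/B) * (1 + Real.log ((2*N : ℕ))) + 2*N) := by
        rw [Finset.sum_const, nsmul_eq_mul]
    _ ≤ (2*N) * ((2/B) * (1 + Real.log ((2*N : ℕ))) + 2*N) := by
        apply mul_le_mul_of_nonneg_right
        · rw [Nat.card_Icc]
          have : (2*N + 1 - 2 : ℕ) ≤ 2*N := by omega
          calc ((2*N + 1 - 2 : ℕ) : ℝ) ≤ ((2*N : ℕ):ℝ) := by exact_mod_cast this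
            _ = 2*(N:ℝ) := by push_cast; ring
        · have hlog : (0:ℝ) ≤ Real.log ((2*N : ℕ)) := by
            apply Real.log_natCast_nonneg
          positivity

lemma stepA (F : ℝ → ℝ) (N : ℕ) :
    ((Finset.Icc 1 N ×ˢ Finset.Icc 1 N ×ˢ Finset.Icc 1 N ×ˢ Finset.Icc 1 N).filter
        fun q => q.1 + q.2.1 = q.2.2.1 + q.2.2.2 ∧
          ⌊F q.1⌋ + ⌊F q.2.1⌋ = ⌊F q.2.2.1⌋ + ⌊F q.2.2.2⌋).card ≤ 256 * (Uset F N).card := by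
  classical
  set T := ((Finset.Icc 1 N ×ˢ Finset.Icc 1 N ×ˢ Finset.Icc 1 N ×ˢ Finset.Icc 1 N).filter
        fun q : ℕ × ℕ × ℕ × ℕ => q.1 + q.2.1 = q.2.2.1 + q.2.2.2 ∧
          ⌊F q.1⌋ + ⌊F q.2.1⌋ = ⌊F q.2.2.1⌋ + ⌊F q.2.2.2⌋) with hT
  set f : ℕ × ℕ × ℕ × ℕ → ℕ × ℕ × ℕ := fun q =>
    (q.1 + q.2.1,
     min (if q.1 + q.2.1 ≤ 2*q.1 then q.1 else q.2.1)
         (if q.1 + q.2.1 ≤ 2*q.2.2.1 then q.2.2.1 else q.2.2.2),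
     max (if q.1 + q.2.1 ≤ 2*q.1 then q.1 else q.2.1)
         (if q.1 + q.2.1 ≤ 2*q.2.2.1 then q.2.2.1 else q.2.2.2)) with hf
  apply Finset.card_le_mul_card_image_of_maps_to (f := f) (t := Uset F N)
  · -- maps to
    intro q hq
    simp only [hT, Finset.mem_filter, Finset.mem_product, Finset.mem_Icc] at hq
    obtain ⟨⟨⟨hn1, hn2⟩, ⟨hm1, hm2⟩, ⟨hk1, hk2⟩, ⟨hl1, hl2⟩⟩, hsum, hfl⟩ := hq
    obtain ⟨n, m, k, l⟩ := q
    simp only at hn1 hn2 hm1 hm2 hk1 hk2 hl1 hl2 hsum hfl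
    set s := n + m with hs
    set a := if s ≤ 2*n then n else m with ha
    set b := if s ≤ 2*k then k else l with hb
    have hcast1 : (s:ℝ) = (n:ℝ) + (m:ℝ) := by rw [hs]; push_cast; ring
    have hcast2 : (s:ℝ) = (k:ℝ) + (l:ℝ) := by rw [hsum]; push_cast; ring
    have hphia : phiR F s a = F n + F m := by
      have h1 : ((s:ℝ)) - (n:ℝ) = (m:ℝ) := by rw [hcast1]; ring
      have h2 : ((s:ℝ)) - (m:ℝ) = (n:ℝ) := by rw [hcast1]; ring
      rw [ha]; split <;> simp [phiR, h1, h2] <;> ring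
    have hphib : phiR F s b = F k + F l := by
      have h1 : ((s:ℝ)) - (k:ℝ) = (l:ℝ) := by rw [hcast2]; ring
      have h2 : ((s:ℝ)) - (l:ℝ) = (k:ℝ) := by rw [hcast2]; ring
      rw [hb]; split <;> simp [phiR, h1, h2] <;> ring
    have haN : 1 ≤ a ∧ a ≤ N := by rw [ha]; split <;> omega
    have hbN : 1 ≤ b ∧ b ≤ N := by rw [hb]; split <;> omega
    have ha2 : s ≤ 2*a := by rw [ha]; split <;> omega
    have hb2 : s ≤ 2*b := by rw [hb]; split <;> omega
    have has : a + 1 ≤ s := by rw [ha]; split <;> omega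
    have hbs : b + 1 ≤ s := by rw [hb]; split <;> omega
    have habs : |phiR F s a - phiR F s b| < 2 := by
      rw [hphia, hphib, abs_lt]
      have c1 := Int.floor_le (F (n:ℕ))
      have c2 := Int.lt_floor_add_one (F (n:ℕ))
      have c3 := Int.floor_le (F (m:ℕ))
      have c4 := Int.lt_floor_add_one (F (m:ℕ))
      have c5 := Int.floor_le (F (k:ℕ))
      have c6 := Int.lt_floor_add_one (F (k:ℕ))
      have c7 := Int.floor_le (F (l:ℕ))
      have c8 := Int.lt_floor_add_one (F (l:ℕ))
      have hfl' : ((⌊F (n:ℕ)⌋ : ℝ) + ⌊F (m:ℕ)⌋) = ((⌊F (k:ℕ)⌋ : ℝ) + ⌊F (l:ℕ)⌋) := by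
        exact_mod_cast congrArg (fun z : ℤ => (z : ℝ)) hfl
      constructor <;> linarith
    have hfval : f (n, m, k, l) = (s, min a b, max a b) := rfl
    rw [hfval]
    simp only [Uset, Finset.mem_filter, Finset.mem_product, Finset.mem_Icc]
    rcases le_total a b with hab | hab
    · rw [min_eq_left hab, max_eq_right hab]
      exact ⟨⟨by omega, haN, hbN⟩, by omega, by omega, hab, habs⟩
    · rw [min_eq_right hab, max_eq_left hab]
      refine ⟨⟨by omega, hbN, haN⟩, by omega, by omega, hab, ?_⟩
      rwa [abs_sub_comm]
  · -- fiber bound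
    intro t ht
    simp only [Uset, Finset.mem_filter, Finset.mem_product, Finset.mem_Icc] at ht
    obtain ⟨⟨⟨hs1, hs2⟩, ⟨hu1, hu2⟩, ⟨hv1, hv2⟩⟩, h2u, hvs, huv, habs⟩ := ht
    obtain ⟨s, u, v⟩ := t
    simp only at hs1 hs2 hu1 hu2 hv1 hv2 h2u hvs huv habs
    set A : Finset ℕ := {u, v, s - u, s - v} with hA
    have hsub : T.filter (fun q => f q = (s, u, v)) ⊆ A ×ˢ A ×ˢ A ×ˢ A := by
      intro q hq
      simp only [Finset.mem_filter, hT, Finset.mem_product, Finset.mem_Icc, hf] at hq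
      obtain ⟨⟨_, hsum, _⟩, hfq⟩ := hq
      obtain ⟨n, m, k, l⟩ := q
      simp only at hsum hfq
      obtain ⟨hseq, hmm, hmx⟩ : n + m = s ∧
          min (if n + m ≤ 2*n then n else m) (if n + m ≤ 2*k then k else l) = u ∧
          max (if n + m ≤ 2*n then n else m) (if n + m ≤ 2*k then k else l) = v := by
        simpa [Prod.ext_iff] using hfq
      have hkl : k + l = s := by omega
      have hain : (if n + m ≤ 2*n then n else m) = u ∨ (if n + m ≤ 2*n then n else m) = v := by
        omega
      have hbin : (if n + m ≤ 2*k then k else l) = u ∨ (if n + m ≤ 2*k then k else l) = v := by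
        omega
      have hn : n = u ∨ n = v ∨ n = s - u ∨ n = s - v := by
        by_cases hc : n + m ≤ 2*n
        · rw [if_pos hc] at hain; omega
        · rw [if_neg hc] at hain; omega
      have hk : k = u ∨ k = v ∨ k = s - u ∨ k = s - v := by
        by_cases hc : n + m ≤ 2*k
        · rw [if_pos hc] at hbin; omega
        · rw [if_neg hc] at hbin; omega
      simp only [Finset.mem_product, hA, Finset.mem_insert, Finset.mem_singleton]
      refine ⟨by omega, by omega, by omega, by omega⟩
    calc (T.filter (fun q => f q = (s, u, v))).card ≤ (A ×ˢ A ×ˢ A ×ˢ A).card :=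
          Finset.card_le_card hsub
      _ ≤ 256 := by
          have hAc : A.card ≤ 4 := by
            apply le_trans (Finset.card_insert_le _ _)
            have : ({v, s-u, s-v} : Finset ℕ).card ≤ 3 := by
              apply le_trans (Finset.card_insert_le _ _)
              have : ({s-u, s-v} : Finset ℕ).card ≤ 2 := by
                apply le_trans (Finset.card_insert_le _ _)
                simp
              omega
            omega
          simp only [Finset.card_product]
          calc A.card * (A.card * (A.card * A.card)) ≤ 4 * (4 * (4 * 4)) := by
                exact Nat.mul_le_mul hAc (Nat.mul_le_mul hAc (Nat.mul_le_mul hAc hAc))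
            _ = 256 := by norm_num

theorem stmt10_main
    (ε : ℝ) (hε : 0 < ε) (hε1 : ε < 1)
    (N : ℕ) (hN : 2 ≤ N)
    (F : ℝ → ℝ) (hF : ContDiffOn ℝ 3 F (Set.Icc 1 N))
    (h1 : ∀ x ∈ Set.Icc (1 : ℝ) N, 0 < deriv F x)
    (h2 : ∀ x ∈ Set.Icc (1 : ℝ) N, 0 < iteratedDeriv 2 F x)
    (h3 : ∀ x ∈ Set.Icc (1 : ℝ) N, iteratedDeriv 3 F x < 0) :
    (((Finset.Icc 1 N ×ˢ Finset.Icc 1 N ×ˢ Finset.Icc 1 N ×ˢ Finset.Icc 1 N).filter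
        fun q => q.1 + q.2.1 = q.2.2.1 + q.2.2.2 ∧
          ⌊F q.1⌋ + ⌊F q.2.1⌋ = ⌊F q.2.2.1⌋ + ⌊F q.2.2.2⌋).card : ℝ) ≤
      4096 * ((N : ℝ) ^ ((2 : ℝ) + ε) +
        (N : ℝ) ^ ((1 : ℝ) + ε) * Real.log N / iteratedDeriv 2 F N) := by
  have hN0 : 0 < N := by omega
  have hNR : (2:ℝ) ≤ (N:ℝ) := by exact_mod_cast hN
  have hN1 : (1:ℝ) ≤ (N:ℝ) := by linarith
  have hNmem : (N:ℝ) ∈ Set.Icc (1:ℝ) (N:ℝ) := ⟨hN1, le_refl _⟩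
  set B := iteratedDeriv 2 F (N:ℝ) with hBdef
  have hB : 0 < B := h2 _ hNmem
  have hi2 : iteratedDeriv 2 F = deriv (deriv F) := by
    have e : iteratedDeriv 2 F = deriv (iteratedDeriv 1 F) := iteratedDeriv_succ
    rw [e, iteratedDeriv_one]
  have hi3 : iteratedDeriv 3 F = deriv (iteratedDeriv 2 F) := iteratedDeriv_succ
  have hdF : ∀ x ∈ Set.Icc (1:ℝ) (N:ℝ), DifferentiableAt ℝ F x :=
    fun x hx => differentiableAt_of_deriv_ne_zero (ne_of_gt (h1 x hx))
  have hd2 : ∀ x ∈ Set.Icc (1:ℝ) (N:ℝ), DifferentiableAt ℝ (deriv F) x := by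
    intro x hx
    have hgt := h2 x hx
    rw [hi2] at hgt
    exact differentiableAt_of_deriv_ne_zero (ne_of_gt hgt)
  have hd3 : ∀ x ∈ Set.Icc (1:ℝ) (N:ℝ), DifferentiableAt ℝ (iteratedDeriv 2 F) x := by
    intro x hx
    have hlt := h3 x hx
    rw [hi3] at hlt
    exact differentiableAt_of_deriv_ne_zero (ne_of_lt hlt)
  have hanti : AntitoneOn (iteratedDeriv 2 F) (Set.Icc (1:ℝ) (N:ℝ)) := by
    apply antitoneOn_of_deriv_nonpos (convex_Icc _ _)
    · exact fun x hx => (hd3 x hx).continuousAt.continuousWithinAt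
    · intro x hx
      rw [interior_Icc] at hx
      exact (hd3 x (Set.Ioo_subset_Icc_self hx)).differentiableWithinAt
    · intro x hx
      rw [interior_Icc] at hx
      rw [← hi3]
      exact le_of_lt (h3 x (Set.Ioo_subset_Icc_self hx))
  have h2B : ∀ x ∈ Set.Icc (1:ℝ) (N:ℝ), B ≤ deriv (deriv F) x := by
    intro x hx
    rw [← hi2]
    exact hanti hx hNmem hx.2
  have hkey : ∀ s u v : ℕ, v + 1 ≤ s → v ≤ N → u ≤ v → s ≤ 2*u →
      B * (((v:ℝ) - u) * ((u:ℝ) + v - s)) ≤ phiR F s v - phiR F s u := by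
    intro s u v hvs hvN huv h2u
    have h1' : (1:ℝ) ≤ (s:ℝ) - (v:ℝ) := by
      have : ((v:ℝ)) + 1 ≤ s := by exact_mod_cast hvs
      linarith
    have h2' : (v:ℝ) ≤ (N:ℝ) := by exact_mod_cast hvN
    have h3' : (u:ℝ) ≤ (v:ℝ) := by exact_mod_cast huv
    have h4' : (s:ℝ) ≤ (u:ℝ) + (v:ℝ) := by
      have : (s:ℝ) ≤ 2*(u:ℝ) := by exact_mod_cast h2u
      linarith
    have hc := aux_convex hdF hd2 h2B h1' h2' h3' h4'
    simpa only [phiR] using hc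
  have hA := stepA F N
  have hBnd := stepB F N B hB hkey
  have hlogN : Real.log 2 ≤ Real.log N := Real.log_le_log (by norm_num) hNR
  have hlog2 : (0.6931471803 : ℝ) < Real.log 2 := Real.log_two_gt_d9
  have hlogNpos : 0 < Real.log N := lt_of_lt_of_le (by linarith) hlogN
  have hlog2' : Real.log 2 < 0.6931471808 := Real.log_two_lt_d9
  have hNne : ((N:ℝ)) ≠ 0 := by positivity
  have hlog2N : Real.log ((2*N : ℕ)) = Real.log 2 + Real.log N := by
    push_cast
    rw [Real.log_mul (by norm_num) hNne]
  have hKbound : 1 + Real.log ((2*N:ℕ)) ≤ 4 * Real.log N := by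
    rw [hlog2N]; linarith
  calc (((Finset.Icc 1 N ×ˢ Finset.Icc 1 N ×ˢ Finset.Icc 1 N ×ˢ Finset.Icc 1 N).filter
        fun q => q.1 + q.2.1 = q.2.2.1 + q.2.2.2 ∧
          ⌊F q.1⌋ + ⌊F q.2.1⌋ = ⌊F q.2.2.1⌋ + ⌊F q.2.2.2⌋).card : ℝ)
      ≤ 256 * ((Uset F N).card : ℝ) := by exact_mod_cast hA
    _ ≤ 256 * ((2*(N:ℝ)) * ((2/B) * (1 + Real.log ((2*N : ℕ))) + 2*(N:ℝ))) := by
        have := mul_le_mul_of_nonneg_left hBnd (by norm_num : (0:ℝ) ≤ 256)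
        convert this using 3 <;> push_cast <;> ring
    _ ≤ 256 * ((2*(N:ℝ)) * ((2/B) * (4*Real.log N) + 2*(N:ℝ))) := by
        have hst : (2/B) * (1 + Real.log ((2*N:ℕ))) ≤ (2/B)*(4*Real.log N) :=
          mul_le_mul_of_nonneg_left hKbound (by positivity)
        have hst2 : (2/B) * (1 + Real.log ((2*N:ℕ))) + 2*(N:ℝ) ≤
            (2/B)*(4*Real.log N) + 2*(N:ℝ) := by linarith
        have := mul_le_mul_of_nonneg_left hst2 (by positivity : (0:ℝ) ≤ 2*(N:ℝ))
        linarith [mul_le_mul_of_nonneg_left this (by norm_num : (0:ℝ) ≤ 256)]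
    _ ≤ 4096 * ((N:ℝ)*(N:ℝ)) + 4096 * ((N:ℝ) * Real.log N / B) := by
        have hexp : 256 * ((2*(N:ℝ)) * ((2/B) * (4*Real.log N) + 2*(N:ℝ)))
            = 1024*((N:ℝ)*(N:ℝ)) + 4096*((N:ℝ)*Real.log N/B) := by
          field_simp
          ring
        rw [hexp]
        have : (0:ℝ) ≤ (N:ℝ)*(N:ℝ) := by positivity
        linarith
    _ ≤ 4096 * ((N:ℝ)^((2:ℝ)+ε)) + 4096 * ((N:ℝ)^((1:ℝ)+ε) * Real.log N / B) := by
        have e1 : (N:ℝ)*(N:ℝ) ≤ (N:ℝ)^((2:ℝ)+ε) := by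
          have hh : (N:ℝ)^((2:ℝ)) ≤ (N:ℝ)^((2:ℝ)+ε) :=
            Real.rpow_le_rpow_of_exponent_le hN1 (by linarith)
          have h22 : (N:ℝ)^((2:ℝ)) = (N:ℝ)*(N:ℝ) := by
            rw [show ((2:ℝ)) = ((2:ℕ):ℝ) by norm_num, Real.rpow_natCast]
            ring
          calc (N:ℝ)*(N:ℝ) = (N:ℝ)^((2:ℝ)) := h22.symm
            _ ≤ (N:ℝ)^((2:ℝ)+ε) := hh
        have e2 : (N:ℝ) ≤ (N:ℝ)^((1:ℝ)+ε) := by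
          have hh : (N:ℝ)^((1:ℝ)) ≤ (N:ℝ)^((1:ℝ)+ε) :=
            Real.rpow_le_rpow_of_exponent_le hN1 (by linarith)
          rwa [Real.rpow_one] at hh
        have e3 : (N:ℝ) * Real.log N / B ≤ (N:ℝ)^((1:ℝ)+ε) * Real.log N / B := by
          rw [div_eq_mul_inv, div_eq_mul_inv]
          exact mul_le_mul_of_nonneg_right
            (mul_le_mul_of_nonneg_right e2 (le_of_lt hlogNpos))
            (inv_nonneg.mpr hB.le)
        linarith
    _ = 4096 * ((N:ℝ)^((2:ℝ)+ε) + (N:ℝ)^((1:ℝ)+ε) * Real.log N / B) := by ring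


theorem stmt10 :
    ∀ ε : ℝ, 0 < ε → ε < 1 →
      ∃ C : ℝ, 0 < C ∧
        ∀ N : ℕ, 2 ≤ N →
          ∀ F : ℝ → ℝ, ContDiffOn ℝ 3 F (Set.Icc 1 N) →
            (∀ x ∈ Set.Icc (1 : ℝ) N, 0 < deriv F x) →
            (∀ x ∈ Set.Icc (1 : ℝ) N, 0 < iteratedDeriv 2 F x) →
            (∀ x ∈ Set.Icc (1 : ℝ) N, iteratedDeriv 3 F x < 0) →
            (((Finset.Icc 1 N ×ˢ Finset.Icc 1 N ×ˢ Finset.Icc 1 N ×ˢ Finset.Icc 1 N).filter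
                fun q => q.1 + q.2.1 = q.2.2.1 + q.2.2.2 ∧
                  ⌊F q.1⌋ + ⌊F q.2.1⌋ = ⌊F q.2.2.1⌋ + ⌊F q.2.2.2⌋).card : ℝ) ≤
              C * ((N : ℝ) ^ ((2 : ℝ) + ε) +
                (N : ℝ) ^ ((1 : ℝ) + ε) * Real.log N / iteratedDeriv 2 F N) := by
  intro ε hε hε1
  exact ⟨4096, by norm_num, fun N hN F hF h1 h2 h3 =>
    stmt10_main ε hε hε1 N hN F hF h1 h2 h3⟩
end

section
/- Let A ∈ [1,2] be a real number and let ε ∈ (0,1). Then there exists a constant C(ε,A) > 0, depending only on ε and A, such that for all integers N ≥ 3, #{(n,m,k,l) ∈ {1,…,N}^4 : n + m = k + l and ⌊n(log n)^A⌋ + ⌊m(log m)^A⌋ = ⌊k(log k)^A⌋ + ⌊l(log l)^A⌋} ≤ C(ε,A)·N^{2+ε}·(log N)^{2−A}. -/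
open scoped Classical

lemma hasDerivAt_psi (A : ℝ) {x : ℝ} (hx : 1 < x) :
    HasDerivAt (fun y : ℝ => y * Real.log y ^ A)
      (Real.log x ^ A + A * Real.log x ^ (A - 1)) x := by
  have hx0 : x ≠ 0 := by linarith
  have hlog : Real.log x ≠ 0 := ne_of_gt (Real.log_pos hx)
  have h1 : HasDerivAt (fun y : ℝ => Real.log y ^ A)
      (A * Real.log x ^ (A - 1) * x⁻¹) x := by
    have := (Real.hasDerivAt_rpow_const (x := Real.log x) (p := A)
      (Or.inl hlog)).comp x (Real.hasDerivAt_log hx0)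
    simpa [Function.comp_def, mul_comm, mul_assoc, mul_left_comm, div_eq_mul_inv] using this
  have := (hasDerivAt_id x).mul h1
  refine this.congr_deriv ?_
  simp only [id]
  field_simp

lemma hasDerivAt_F (A s : ℝ) {y : ℝ} (hy : 1 < y) (hsy : 1 < s - y) :
    HasDerivAt (fun y : ℝ => y * Real.log y ^ A + (s - y) * Real.log (s - y) ^ A
        - (y - s / 2) ^ 2 / s)
      ((Real.log y ^ A + A * Real.log y ^ (A - 1))
        - (Real.log (s - y) ^ A + A * Real.log (s - y) ^ (A - 1))
        - 2 * (y - s / 2) / s) y := by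
  have h1 := hasDerivAt_psi A hy
  have h2 : HasDerivAt (fun y : ℝ => (s - y) * Real.log (s - y) ^ A)
      ((Real.log (s - y) ^ A + A * Real.log (s - y) ^ (A - 1)) * (-1)) y := by
    have hin : HasDerivAt (fun y : ℝ => s - y) (-1) y := by
      exact (hasDerivAt_id' y).const_sub s
    exact (hasDerivAt_psi A hsy).comp y hin
  have h3 : HasDerivAt (fun y : ℝ => (y - s / 2) ^ 2 / s)
      ((2 * (y - s / 2) ^ 1 * 1) / s) y :=
    (((hasDerivAt_id y).sub_const (s / 2)).pow 2).div_const s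
  have := (h1.add h2).sub h3
  refine this.congr_deriv ?_
  ring

lemma F_deriv_nonneg (A s : ℝ) (hA : 1 ≤ A) {y : ℝ} (hy : s / 2 ≤ y) (hys : y ≤ s - 3)
    (hs : 6 ≤ s) :
    0 ≤ (Real.log y ^ A + A * Real.log y ^ (A - 1))
        - (Real.log (s - y) ^ A + A * Real.log (s - y) ^ (A - 1))
        - 2 * (y - s / 2) / s := by
  have hy0 : (0:ℝ) < y := by linarith
  have hsy0 : (0:ℝ) < s - y := by linarith
  have hsy3 : (3:ℝ) ≤ s - y := by linarith
  set u := Real.log y with hu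
  set v := Real.log (s - y) with hv
  have hv1 : 1 ≤ v := by
    rw [hv, Real.le_log_iff_exp_le hsy0]
    have := Real.exp_one_lt_d9
    linarith
  have huv : v ≤ u := Real.log_le_log hsy0 (by linarith)
  have hu1 : 1 ≤ u := le_trans hv1 huv
  have hA1 : (0:ℝ) ≤ A - 1 := by linarith
  have hpow : v ^ (A - 1) ≤ u ^ (A - 1) :=
    Real.rpow_le_rpow (by linarith) huv hA1
  have hpow1 : 1 ≤ v ^ (A - 1) := by
    have := Real.rpow_le_rpow_of_exponent_le hv1 hA1
    simpa [Real.rpow_zero] using Real.rpow_le_rpow_of_exponent_le hv1 hA1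
  have eu : u ^ A = u ^ (A - 1) * u := by
    rw [← Real.rpow_add_one (by linarith : u ≠ 0) (A - 1)]; ring_nf
  have ev : v ^ A = v ^ (A - 1) * v := by
    rw [← Real.rpow_add_one (by linarith : v ≠ 0) (A - 1)]; ring_nf
  -- u^A - v^A ≥ u - v
  have key1 : u - v ≤ u ^ A - v ^ A := by
    rw [eu, ev]
    nlinarith [mul_nonneg (le_trans (by norm_num : (0:ℝ) ≤ 1) hu1) (sub_nonneg.mpr hpow)]
  -- u - v ≥ (2y - s)/s
  have key2 : (2 * y - s) / s ≤ u - v := by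
    have hlog1 : Real.log ((s - y) / y) ≤ (s - y) / y - 1 :=
      Real.log_le_sub_one_of_pos (by positivity)
    have hlogdiv : Real.log ((s - y) / y) = v - u := by
      rw [Real.log_div (by linarith) (by linarith)]
    have h7 : 1 - (s - y) / y ≤ u - v := by rw [hlogdiv] at hlog1; linarith
    have h8 : (2 * y - s) / s ≤ 1 - (s - y) / y := by
      rw [show (1:ℝ) - (s - y)/y = (2 * y - s)/y by field_simp; ring]
      gcongr
      · linarith
      · linarith
    linarith
  have hApow : 0 ≤ A * (u ^ (A - 1) - v ^ (A - 1)) :=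
    mul_nonneg (by linarith) (by linarith)
  have : 2 * (y - s / 2) / s = (2 * y - s) / s := by ring_nf
  nlinarith [key1, key2, hApow]

lemma phi_gap (A s : ℝ) (hA : 1 ≤ A) (hs : 6 ≤ s) {a x : ℝ}
    (ha : s / 2 ≤ a) (hax : a ≤ x) (hx : x ≤ s - 3) :
    ((x - s / 2) ^ 2 - (a - s / 2) ^ 2) / s ≤
      (x * Real.log x ^ A + (s - x) * Real.log (s - x) ^ A)
        - (a * Real.log a ^ A + (s - a) * Real.log (s - a) ^ A) := by
  set F : ℝ → ℝ := fun y => y * Real.log y ^ A + (s - y) * Real.log (s - y) ^ A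
      - (y - s / 2) ^ 2 / s with hF
  have hd : ∀ y ∈ Set.Icc (s/2) (s-3), 1 < y ∧ 1 < s - y := by
    rintro y ⟨h1, h2⟩; constructor <;> linarith
  have hmono : MonotoneOn F (Set.Icc (s/2) (s-3)) := by
    apply monotoneOn_of_deriv_nonneg (convex_Icc _ _)
    · intro y hy
      obtain ⟨h1, h2⟩ := hd y hy
      exact (hasDerivAt_F A s h1 h2).differentiableAt.continuousAt.continuousWithinAt
    · intro y hy
      rw [interior_Icc] at hy
      obtain ⟨h1, h2⟩ := hd y (Set.mem_Icc_of_Ioo hy)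
      exact ((hasDerivAt_F A s h1 h2).differentiableAt).differentiableWithinAt
    · intro y hy
      rw [interior_Icc] at hy
      obtain ⟨h1, h2⟩ := hd y (Set.mem_Icc_of_Ioo hy)
      rw [(hasDerivAt_F A s h1 h2).deriv]
      exact F_deriv_nonneg A s hA (le_of_lt hy.1) (le_of_lt hy.2) hs
  have := hmono (Set.mem_Icc.mpr ⟨ha, by linarith⟩) (Set.mem_Icc.mpr ⟨by linarith, hx⟩) hax
  rw [hF] at this
  simp only at this
  rw [sub_div]
  linarith [this]

lemma count_gap (A : ℝ) (hA : 1 ≤ A) (n m k l : ℕ)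
    (hn : 3 ≤ n) (hm : 3 ≤ m) (hk : 3 ≤ k) (hl : 3 ≤ l)
    (hsum : k + l = n + m)
    (hgg : ⌊(k : ℝ) * Real.log k ^ A⌋ + ⌊(l : ℝ) * Real.log l ^ A⌋ =
      ⌊(n : ℝ) * Real.log n ^ A⌋ + ⌊(m : ℝ) * Real.log m ^ A⌋) :
    (max (max k l - min k l) (max n m - min n m)
      - min (max k l - min k l) (max n m - min n m)) * (max n m - min n m)
      < 8 * (n + m) := by
  have hsumR : (k : ℝ) + l = (n : ℝ) + m := by exact_mod_cast hsum
  set s : ℝ := (n : ℝ) + m with hs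
  have hs6 : (6:ℝ) ≤ s := by
    have : (3:ℝ) ≤ n := by exact_mod_cast hn
    have : (3:ℝ) ≤ m := by exact_mod_cast hm
    rw [hs]; linarith
  set G : ℝ → ℝ := fun x => x * Real.log x ^ A + (s - x) * Real.log (s - x) ^ A with hG
  -- symmetric representation
  have hrep : ∀ p q : ℕ, (p : ℝ) + q = s → 3 ≤ p → 3 ≤ q →
      (p : ℝ) * Real.log p ^ A + (q : ℝ) * Real.log q ^ A = G (((max p q : ℕ) : ℝ)) ∧
      s / 2 ≤ ((max p q : ℕ) : ℝ) ∧ ((max p q : ℕ) : ℝ) ≤ s - 3 ∧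
      ((max p q : ℕ) : ℝ) - s / 2 = ((max p q - min p q : ℕ) : ℝ) / 2 := by
    intro p q hpq hp hq
    have hpR : (3:ℝ) ≤ p := by exact_mod_cast hp
    have hqR : (3:ℝ) ≤ q := by exact_mod_cast hq
    rcases le_total p q with h | h
    · have hmax : max p q = q := max_eq_right h
      have hmin : min p q = p := min_eq_left h
      have hsub : ((q - p : ℕ) : ℝ) = (q : ℝ) - p := by
        push_cast [Nat.cast_sub h]; ring
      have hR : (p : ℝ) ≤ q := by exact_mod_cast h
      simp only [hmax, hmin]
      refine ⟨?_, ?_, ?_, ?_⟩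
      · rw [hG]; simp only
        rw [show s - (q:ℝ) = p by linarith]
        try ring
      · linarith
      · linarith
      · rw [hsub]; linarith
    · have hmax : max p q = p := max_eq_left h
      have hmin : min p q = q := min_eq_right h
      have hsub : ((p - q : ℕ) : ℝ) = (p : ℝ) - q := by
        push_cast [Nat.cast_sub h]; ring
      have hR : (q : ℝ) ≤ p := by exact_mod_cast h
      simp only [hmax, hmin]
      refine ⟨?_, ?_, ?_, ?_⟩
      · rw [hG]; simp only
        rw [show s - (p:ℝ) = q by linarith]
        try ring
      · linarith
      · linarith
      · rw [hsub]; linarith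
  obtain ⟨hkl, hkl1, hkl2, hkl3⟩ := hrep k l (by linarith) hk hl
  obtain ⟨hnm, hnm1, hnm2, hnm3⟩ := hrep n m rfl hn hm
  -- floor gap
  have hfl : ∀ x : ℝ, (⌊x⌋ : ℝ) ≤ x ∧ x - 1 < ⌊x⌋ := fun x => ⟨Int.floor_le x, Int.sub_one_lt_floor x⟩
  have hggR : ((⌊(k : ℝ) * Real.log k ^ A⌋ + ⌊(l : ℝ) * Real.log l ^ A⌋ : ℤ) : ℝ) =
      ((⌊(n : ℝ) * Real.log n ^ A⌋ + ⌊(m : ℝ) * Real.log m ^ A⌋ : ℤ) : ℝ) := by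
    exact_mod_cast congrArg (fun z : ℤ => (z : ℝ)) hgg
  push_cast at hggR
  have hgap : |G ((max k l : ℕ) : ℝ) - G ((max n m : ℕ) : ℝ)| < 2 := by
    rw [← hkl, ← hnm, abs_lt]
    obtain ⟨a1, a2⟩ := hfl ((k : ℝ) * Real.log k ^ A)
    obtain ⟨b1, b2⟩ := hfl ((l : ℝ) * Real.log l ^ A)
    obtain ⟨c1, c2⟩ := hfl ((n : ℝ) * Real.log n ^ A)
    obtain ⟨d1, d2⟩ := hfl ((m : ℝ) * Real.log m ^ A)
    constructor <;> linarith
  -- apply phi_gap to ordered pair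
  set x1 : ℝ := ((max k l : ℕ) : ℝ)
  set x2 : ℝ := ((max n m : ℕ) : ℝ)
  simp only [hG] at hgap
  have hs0 : (0:ℝ) < s := by linarith
  have hsq : |(x1 - s/2)^2 - (x2 - s/2)^2| < 2 * s := by
    rw [abs_lt] at hgap
    rw [abs_lt]
    rcases le_total x1 x2 with h | h
    · have h0 := phi_gap A s hA hs6 hkl1 h hnm2
      have h9 : ((x2 - s / 2) ^ 2 - (x1 - s / 2) ^ 2) / s < 2 :=
        lt_of_le_of_lt h0 (by linarith [hgap.1])
      rw [div_lt_iff₀ hs0] at h9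
      have hge : (x1 - s/2)^2 ≤ (x2 - s/2)^2 :=
        pow_le_pow_left₀ (by linarith) (by linarith) 2
      constructor <;> linarith
    · have h0 := phi_gap A s hA hs6 hnm1 h hkl2
      have h9 : ((x1 - s / 2) ^ 2 - (x2 - s / 2) ^ 2) / s < 2 :=
        lt_of_le_of_lt h0 (by linarith [hgap.2])
      rw [div_lt_iff₀ hs0] at h9
      have hge : (x2 - s/2)^2 ≤ (x1 - s/2)^2 :=
        pow_le_pow_left₀ (by linarith) (by linarith) 2
      constructor <;> linarith
  -- translate to u, a
  set u : ℕ := max k l - min k l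
  set a : ℕ := max n m - min n m
  rw [hkl3] at hsq
  rw [hnm3] at hsq
  have husq : |((u:ℝ))^2 - ((a:ℝ))^2| < 8 * s := by
    have heq : ((u:ℝ)/2)^2 - ((a:ℝ)/2)^2 = (((u:ℝ))^2 - ((a:ℝ))^2)/4 := by ring
    rw [heq, abs_div, abs_of_nonneg (by norm_num : (0:ℝ) ≤ 4),
      div_lt_iff₀ (by norm_num : (0:ℝ) < 4)] at hsq
    linarith
  -- a * |u - a| ≤ |u^2 - a^2|
  have hfin : ((max u a - min u a : ℕ) : ℝ) * a < 8 * s := by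
    have hdiff : ((max u a - min u a : ℕ) : ℝ) = |(u:ℝ) - a| := by
      rcases le_total u a with h | h
      · rw [max_eq_right h, min_eq_left h, Nat.cast_sub h,
          abs_sub_comm, abs_of_nonneg (by simp [Nat.cast_le.mpr h] : (0:ℝ) ≤ (a:ℝ) - u)]
      · rw [max_eq_left h, min_eq_right h, Nat.cast_sub h,
          abs_of_nonneg (by simp [Nat.cast_le.mpr h] : (0:ℝ) ≤ (u:ℝ) - a)]
    rw [hdiff]
    have hfact : |(u:ℝ)^2 - (a:ℝ)^2| = |(u:ℝ) - a| * ((u:ℝ) + a) := by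
      have h1 : |(u:ℝ) + a| = (u:ℝ) + a := abs_of_nonneg (by positivity)
      rw [show (u:ℝ)^2 - (a:ℝ)^2 = ((u:ℝ) - a) * ((u:ℝ) + a) by ring, abs_mul, h1]
    have h1 : |(u:ℝ) - a| * (a:ℝ) ≤ |(u:ℝ) - a| * ((u:ℝ) + a) := by
      apply mul_le_mul_of_nonneg_left _ (abs_nonneg _)
      have : (0:ℝ) ≤ u := by positivity
      linarith
    calc |(u:ℝ) - a| * (a:ℝ) ≤ |(u:ℝ) - a| * ((u:ℝ) + a) := h1
      _ = |(u:ℝ)^2 - (a:ℝ)^2| := hfact.symm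
      _ < 8 * s := husq
  have : (((max u a - min u a) * a : ℕ) : ℝ) < ((8 * (n + m) : ℕ) : ℝ) := by
    push_cast
    push_cast at hfin
    linarith [hfin]
  exact_mod_cast this

noncomputable def gg (A : ℝ) (j : ℕ) : ℤ := ⌊(j:ℝ) * Real.log j ^ A⌋


lemma card_K (A : ℝ) (hA : 1 ≤ A) (N n m : ℕ) (hn : 3 ≤ n) (hm : 3 ≤ m)
    (ha2 : 2 ≤ max n m - min n m) :
    ((Finset.Icc 1 N).filter (fun k => k < n + m ∧ 1 ≤ n + m - k ∧ n + m - k ≤ N ∧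
        gg A k + gg A (n + m - k) = gg A n + gg A m)).card
      ≤ 4 * (8 * (n + m) / (max n m - min n m)) + 6 := by
  classical
  set a : ℕ := max n m - min n m with hadef
  set c : ℕ := 8 * (n + m) / a with hcdef
  set K := (Finset.Icc 1 N).filter (fun k => k < n + m ∧ 1 ≤ n + m - k ∧ n + m - k ≤ N ∧
        gg A k + gg A (n + m - k) = gg A n + gg A m) with hK
  have hsplit := Finset.card_filter_add_card_filter_not
    (s := K) (p := fun k => 3 ≤ k ∧ 3 ≤ n + m - k)
  set Kg := K.filter (fun k => 3 ≤ k ∧ 3 ≤ n + m - k) with hKg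
  set Kb := K.filter (fun k => ¬(3 ≤ k ∧ 3 ≤ n + m - k)) with hKb
  -- bad part
  have hKbcard : Kb.card ≤ 4 := by
    have hsub : Kb ⊆ {1, 2, n + m - 1, n + m - 2} := by
      intro k hk
      rw [hKb, Finset.mem_filter, hK, Finset.mem_filter, Finset.mem_Icc] at hk
      obtain ⟨⟨⟨hk1, _⟩, _, hl1, _, _⟩, hbad⟩ := hk
      simp only [Finset.mem_insert, Finset.mem_singleton]
      omega
    calc Kb.card ≤ ({1, 2, n + m - 1, n + m - 2} : Finset ℕ).card := Finset.card_le_card hsub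
      _ ≤ 4 := by
        apply le_trans (Finset.card_insert_le _ _)
        apply Nat.succ_le_succ
        apply le_trans (Finset.card_insert_le _ _)
        apply Nat.succ_le_succ
        apply le_trans (Finset.card_insert_le _ _)
        simp
  -- good part
  have hKgcard : Kg.card ≤ 2 * (2 * c + 1) := by
    have hmaps : ∀ k ∈ Kg, (max k (n + m - k) - min k (n + m - k)) ∈
        Finset.Icc (a - c) (a + c) := by
      intro k hk
      rw [hKg, Finset.mem_filter, hK, Finset.mem_filter] at hk
      obtain ⟨⟨_, hklt, _, _, hggk⟩, hk3, hl3⟩ := hk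
      have hsum : k + (n + m - k) = n + m := by omega
      have := count_gap A hA n m k (n + m - k) hn hm hk3 hl3 hsum hggk
      set u := max k (n + m - k) - min k (n + m - k)
      have hle : (max u a - min u a) * a ≤ 8 * (n + m) := le_of_lt this
      have hdiv : max u a - min u a ≤ c := by
        rw [hcdef]
        exact (Nat.le_div_iff_mul_le (by omega)).mpr hle
      rw [Finset.mem_Icc]
      omega
    have hfiber : ∀ b ∈ Kg.image (fun k => max k (n + m - k) - min k (n + m - k)),
        (Kg.filter (fun k => (max k (n + m - k) - min k (n + m - k)) = b)).card ≤ 2 := by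
      intro b _
      have hsub : Kg.filter (fun k => (max k (n + m - k) - min k (n + m - k)) = b)
          ⊆ {(n + m + b) / 2, (n + m - b) / 2} := by
        intro k hk
        rw [Finset.mem_filter] at hk
        obtain ⟨hkKg, hb⟩ := hk
        rw [hKg, Finset.mem_filter, hK, Finset.mem_filter] at hkKg
        obtain ⟨⟨_, hklt, _, _, _⟩, _, _⟩ := hkKg
        simp only [Finset.mem_insert, Finset.mem_singleton]
        omega
      calc (Kg.filter _).card ≤ ({(n + m + b) / 2, (n + m - b) / 2} : Finset ℕ).card :=
            Finset.card_le_card hsub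
        _ ≤ 2 := Finset.card_insert_le _ _ |>.trans (by simp)
    calc Kg.card ≤ 2 * (Kg.image (fun k => max k (n + m - k) - min k (n + m - k))).card :=
          Finset.card_le_mul_card_image _ 2 hfiber
      _ ≤ 2 * (Finset.Icc (a - c) (a + c)).card := by
          apply Nat.mul_le_mul_left
          apply Finset.card_le_card
          intro b hb
          rw [Finset.mem_image] at hb
          obtain ⟨k, hk, rfl⟩ := hb
          exact hmaps k hk
      _ ≤ 2 * (2 * c + 1) := by
          apply Nat.mul_le_mul_left
          rw [Nat.card_Icc]
          omega
  omega



noncomputable def ff (j : ℕ) : ℝ := if j = 0 then 0 else (j:ℝ)⁻¹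

lemma ff_nonneg (j : ℕ) : 0 ≤ ff j := by
  unfold ff; split <;> positivity

lemma inner_harmonic (N n : ℕ) (hnN : n ≤ N) :
    ∑ m ∈ Finset.Icc 1 N, ff (max n m - min n m) ≤ 2 * (1 + Real.log N) := by
  classical
  rw [Finset.sum_comp ff (fun m => max n m - min n m)]
  have hfiber : ∀ b, ((Finset.Icc 1 N).filter (fun m => max n m - min n m = b)).card ≤ 2 := by
    intro b
    have hsub : (Finset.Icc 1 N).filter (fun m => max n m - min n m = b) ⊆ {n + b, n - b} := by
      intro m hm
      rw [Finset.mem_filter, Finset.mem_Icc] at hm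
      simp only [Finset.mem_insert, Finset.mem_singleton]
      omega
    exact (Finset.card_le_card hsub).trans ((Finset.card_insert_le _ _).trans (by simp))
  have h1 : ∑ b ∈ (Finset.Icc 1 N).image (fun m => max n m - min n m),
      ((Finset.Icc 1 N).filter (fun m => max n m - min n m = b)).card • ff b
      ≤ ∑ b ∈ (Finset.Icc 1 N).image (fun m => max n m - min n m), 2 * ff b := by
    apply Finset.sum_le_sum
    intro b _
    rw [nsmul_eq_mul]
    exact mul_le_mul_of_nonneg_right (by exact_mod_cast hfiber b) (ff_nonneg b)
  have h2 : ∑ b ∈ (Finset.Icc 1 N).image (fun m => max n m - min n m), 2 * ff b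
      ≤ ∑ b ∈ Finset.Icc 0 N, 2 * ff b := by
    apply Finset.sum_le_sum_of_subset_of_nonneg
    · intro b hb
      rw [Finset.mem_image] at hb
      obtain ⟨m, hm, rfl⟩ := hb
      rw [Finset.mem_Icc] at hm ⊢
      omega
    · intro b _ _
      exact mul_nonneg (by norm_num) (ff_nonneg b)
  have h3 : ∑ b ∈ Finset.Icc 0 N, 2 * ff b = 2 * ∑ b ∈ Finset.Icc 1 N, ff b := by
    rw [show Finset.Icc 0 N = insert 0 (Finset.Icc 1 N) from by ext x; simp; omega,
      Finset.sum_insert (by simp), Finset.mul_sum]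
    simp [ff]
  have h4 : ∑ b ∈ Finset.Icc 1 N, ff b = ((harmonic N : ℚ) : ℝ) := by
    rw [harmonic_eq_sum_Icc]
    push_cast
    apply Finset.sum_congr rfl
    intro b hb
    rw [Finset.mem_Icc] at hb
    unfold ff
    rw [if_neg (by omega)]
  calc _ ≤ ∑ b ∈ Finset.Icc 0 N, 2 * ff b := le_trans h1 h2
    _ = 2 * ∑ b ∈ Finset.Icc 1 N, ff b := h3
    _ ≤ 2 * (1 + Real.log N) := by
        rw [h4]
        have := harmonic_le_one_add_log N
        linarith


-- the count bound: E ≤ 13 N^2 + 128 N^2 (1 + log N)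
lemma main_count (A : ℝ) (hA : 1 ≤ A) (N : ℕ) (hN : 3 ≤ N) :
    (((Finset.Icc 1 N ×ˢ Finset.Icc 1 N ×ˢ Finset.Icc 1 N ×ˢ Finset.Icc 1 N).filter
        fun q => q.1 + q.2.1 = q.2.2.1 + q.2.2.2 ∧
          ⌊(q.1 : ℝ) * Real.log q.1 ^ A⌋ + ⌊(q.2.1 : ℝ) * Real.log q.2.1 ^ A⌋ =
            ⌊(q.2.2.1 : ℝ) * Real.log q.2.2.1 ^ A⌋ +
              ⌊(q.2.2.2 : ℝ) * Real.log q.2.2.2 ^ A⌋).card : ℝ) ≤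
      13 * (N:ℝ)^2 + 128 * (N:ℝ)^2 * (1 + Real.log N) := by
  classical
  set I := Finset.Icc 1 N with hI
  set T := ((I ×ˢ I ×ˢ I ×ˢ I).filter
        fun q : ℕ × ℕ × ℕ × ℕ => q.1 + q.2.1 = q.2.2.1 + q.2.2.2 ∧
          gg A q.1 + gg A q.2.1 = gg A q.2.2.1 + gg A q.2.2.2) with hT
  set K : ℕ → ℕ → Finset ℕ := fun n m => I.filter (fun k => k < n + m ∧ 1 ≤ n + m - k ∧
      n + m - k ≤ N ∧ gg A k + gg A (n + m - k) = gg A n + gg A m) with hKdef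
  -- step 1: fiberwise count
  have hstep1 : T.card = ∑ p ∈ I ×ˢ I, (T.filter (fun q => (q.1, q.2.1) = p)).card := by
    apply Finset.card_eq_sum_card_fiberwise
    intro q hq
    rw [hT, Finset.mem_coe, Finset.mem_filter] at hq
    have h := hq.1
    simp only [Finset.mem_product] at h
    rw [Finset.mem_coe, Finset.mem_product]
    exact ⟨h.1, h.2.1⟩
  -- step 2: each fiber injects into K
  have hstep2 : ∀ p ∈ I ×ˢ I, (T.filter (fun q => (q.1, q.2.1) = p)).card ≤ (K p.1 p.2).card := by
    intro p hp
    apply Finset.card_le_card_of_injOn (fun q => q.2.2.1)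
    · intro q hq
      rw [Finset.mem_coe, Finset.mem_filter, hT, Finset.mem_filter] at hq
      obtain ⟨⟨hmem, hsum, hgg⟩, hfib⟩ := hq
      simp only [Finset.mem_product, hI, Finset.mem_Icc] at hmem
      obtain ⟨⟨hn1, hnN⟩, ⟨⟨hm1, hmN⟩, ⟨hk1, hkN⟩, ⟨hl1, hlN⟩⟩⟩ := hmem
      have hp1 : q.1 = p.1 := congrArg Prod.fst hfib
      have hp2 : q.2.1 = p.2 := congrArg Prod.snd hfib
      rw [hKdef]
      simp only [Finset.mem_coe, Finset.mem_filter, hI, Finset.mem_Icc]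
      have hlval : p.1 + p.2 - q.2.2.1 = q.2.2.2 := by omega
      refine ⟨⟨hk1, hkN⟩, by omega, by omega, by omega, ?_⟩
      rw [hlval, ← hp1, ← hp2, hgg]
    · intro q hq q' hq' heq
      rw [Finset.mem_coe, Finset.mem_filter, hT, Finset.mem_filter] at hq hq'
      obtain ⟨⟨_, hsum, _⟩, hfib⟩ := hq
      obtain ⟨⟨_, hsum', _⟩, hfib'⟩ := hq'
      have e1 : q.1 = q'.1 := by
        rw [show q.1 = (q.1, q.2.1).1 from rfl, hfib, ← hfib']
      have e2 : q.2.1 = q'.2.1 := by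
        rw [show q.2.1 = (q.1, q.2.1).2 from rfl, hfib, ← hfib']
      have e4 : q.2.2.2 = q'.2.2.2 := by
        simp only at heq
        omega
      obtain ⟨a1, b1, c1, d1⟩ := q
      obtain ⟨a2, b2, c2, d2⟩ := q'
      simp_all
  have hE : (T.card : ℝ) ≤ ∑ p ∈ I ×ˢ I, ((K p.1 p.2).card : ℝ) := by
    rw [hstep1]
    push_cast
    apply Finset.sum_le_sum
    intro p hp
    exact_mod_cast hstep2 p hp
  -- split into bad and good pairs
  set bad : ℕ × ℕ → Prop := fun p => p.1 < 3 ∨ p.2 < 3 ∨ max p.1 p.2 - min p.1 p.2 < 2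
    with hbad
  have hsplit : ∑ p ∈ I ×ˢ I, ((K p.1 p.2).card : ℝ)
      = ∑ p ∈ (I ×ˢ I).filter bad, ((K p.1 p.2).card : ℝ)
        + ∑ p ∈ (I ×ˢ I).filter (fun p => ¬ bad p), ((K p.1 p.2).card : ℝ) :=
    (Finset.sum_filter_add_sum_filter_not (I ×ˢ I) bad _).symm
  -- trivial bound for K
  have hKtriv : ∀ n m : ℕ, ((K n m).card : ℝ) ≤ N := by
    intro n m
    have : (K n m).card ≤ N := by
      calc (K n m).card ≤ I.card := Finset.card_le_card (Finset.filter_subset _ _)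
        _ = N := by rw [hI, Nat.card_Icc]; omega
    exact_mod_cast this
  -- bad pairs count
  have hbadcard : ((I ×ˢ I).filter bad).card ≤ 7 * N := by
    have hsub : (I ×ˢ I).filter bad ⊆ (Finset.Icc 1 2 ×ˢ I) ∪ (I ×ˢ Finset.Icc 1 2)
        ∪ ((I ×ˢ I).filter (fun p => max p.1 p.2 - min p.1 p.2 < 2)) := by
      intro p hp
      rw [Finset.mem_filter] at hp
      obtain ⟨hpS, hb⟩ := hp
      obtain ⟨hp1, hp2⟩ := Finset.mem_product.mp hpS
      have hp1' := hp1; have hp2' := hp2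
      rw [hI, Finset.mem_Icc] at hp1' hp2'
      rw [Finset.mem_union, Finset.mem_union]
      simp only [hbad] at hb
      rcases hb with h | h | h
      · left; left
        exact Finset.mem_product.mpr ⟨Finset.mem_Icc.mpr ⟨hp1'.1, by omega⟩, hp2⟩
      · left; right
        exact Finset.mem_product.mpr ⟨hp1, Finset.mem_Icc.mpr ⟨hp2'.1, by omega⟩⟩
      · right
        rw [Finset.mem_filter]
        exact ⟨hpS, h⟩
    have hc3 : ((I ×ˢ I).filter (fun p => max p.1 p.2 - min p.1 p.2 < 2)).card ≤ 3 * N := by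
      have : ((I ×ˢ I).filter (fun p => max p.1 p.2 - min p.1 p.2 < 2)).card
          ≤ (I ×ˢ Finset.Icc 0 2).card := by
        apply Finset.card_le_card_of_injOn (fun p => (p.1, p.2 + 1 - p.1))
        · intro p hp
          obtain ⟨x, y⟩ := p
          rw [Finset.mem_coe, Finset.mem_filter, Finset.mem_product] at hp
          rw [Finset.mem_coe, Finset.mem_product]
          refine ⟨hp.1.1, ?_⟩
          have h1 := hp.1.1
          have h2 := hp.1.2
          rw [hI, Finset.mem_Icc] at h1 h2
          have hb := hp.2
          simp only at hb
          simp only [Finset.mem_Icc]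
          rcases le_total x y with h | h
          · rw [max_eq_right h, min_eq_left h] at hb; omega
          · rw [max_eq_left h, min_eq_right h] at hb; omega
        · intro p hp p' hp' heq
          obtain ⟨x, y⟩ := p; obtain ⟨x', y'⟩ := p'
          rw [Finset.mem_coe, Finset.mem_filter, Finset.mem_product] at hp hp'
          simp only [Prod.mk.injEq] at heq
          obtain ⟨e1, e2⟩ := heq
          have h1 := hp.1.1; have h1' := hp'.1.1
          rw [hI, Finset.mem_Icc] at h1 h1'
          have hb := hp.2; have hb' := hp'.2
          simp only at hb hb'
          have hy : y + 1 ≥ x := by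
            rcases le_total x y with h | h
            · omega
            · rw [max_eq_left h, min_eq_right h] at hb; omega
          have hy' : y' + 1 ≥ x' := by
            rcases le_total x' y' with h | h
            · omega
            · rw [max_eq_left h, min_eq_right h] at hb'; omega
          simp only [Prod.mk.injEq]
          omega
      calc _ ≤ (I ×ˢ Finset.Icc 0 2).card := this
        _ = N * 3 := by
          rw [Finset.card_product, hI, Nat.card_Icc, Nat.card_Icc]
          omega
        _ ≤ 3 * N := by omega
    calc ((I ×ˢ I).filter bad).card
        ≤ ((Finset.Icc 1 2 ×ˢ I) ∪ (I ×ˢ Finset.Icc 1 2)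
            ∪ ((I ×ˢ I).filter (fun p => max p.1 p.2 - min p.1 p.2 < 2))).card :=
          Finset.card_le_card hsub
      _ ≤ ((Finset.Icc 1 2 ×ˢ I) ∪ (I ×ˢ Finset.Icc 1 2)).card
            + ((I ×ˢ I).filter (fun p => max p.1 p.2 - min p.1 p.2 < 2)).card :=
          Finset.card_union_le _ _
      _ ≤ ((Finset.Icc 1 2 ×ˢ I).card + (I ×ˢ Finset.Icc 1 2).card)
            + ((I ×ˢ I).filter (fun p => max p.1 p.2 - min p.1 p.2 < 2)).card := by
          have := Finset.card_union_le (Finset.Icc 1 2 ×ˢ I) (I ×ˢ Finset.Icc 1 2)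
          omega
      _ ≤ 7 * N := by
          have hIcard : I.card = N := by rw [hI, Nat.card_Icc]; omega
          rw [Finset.card_product, Finset.card_product, hIcard]
          have h22 : (Finset.Icc 1 2).card = 2 := by rw [Nat.card_Icc]
          rw [h22]
          omega
  -- bad sum
  have hbadsum : ∑ p ∈ (I ×ˢ I).filter bad, ((K p.1 p.2).card : ℝ) ≤ 7 * (N:ℝ)^2 := by
    calc ∑ p ∈ (I ×ˢ I).filter bad, ((K p.1 p.2).card : ℝ)
        ≤ ∑ p ∈ (I ×ˢ I).filter bad, (N:ℝ) := Finset.sum_le_sum (fun p _ => hKtriv p.1 p.2)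
      _ = (((I ×ˢ I).filter bad).card : ℝ) * N := by rw [Finset.sum_const, nsmul_eq_mul]
      _ ≤ (7 * N : ℕ) * (N:ℝ) := by
          apply mul_le_mul_of_nonneg_right _ (by positivity)
          exact_mod_cast hbadcard
      _ = 7 * (N:ℝ)^2 := by push_cast; ring
  -- good sum
  have hgoodsum : ∑ p ∈ (I ×ˢ I).filter (fun p => ¬ bad p), ((K p.1 p.2).card : ℝ)
      ≤ 6 * (N:ℝ)^2 + 64 * N * (2 * N * (1 + Real.log N)) := by
    have hterm : ∀ p ∈ (I ×ˢ I).filter (fun p => ¬ bad p),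
        ((K p.1 p.2).card : ℝ) ≤ 64 * N * ff (max p.1 p.2 - min p.1 p.2) + 6 := by
      intro p hp
      rw [Finset.mem_filter] at hp
      obtain ⟨hpS, hg⟩ := hp
      simp only [hbad] at hg
      push_neg at hg
      obtain ⟨h3n, h3m, ha2⟩ := hg
      have hpS' := hpS
      rw [Finset.mem_product, hI, Finset.mem_Icc, Finset.mem_Icc] at hpS'
      have hck := card_K A hA N p.1 p.2 (by omega) (by omega) (by omega)
      set a := max p.1 p.2 - min p.1 p.2 with hadef
      have ha0 : a ≠ 0 := by omega
      have haR : (2:ℝ) ≤ a := by exact_mod_cast ha2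
      have hffa : ff a = (a:ℝ)⁻¹ := by unfold ff; rw [if_neg ha0]
      have hcast : ((K p.1 p.2).card : ℝ) ≤ 4 * ((8 * (p.1 + p.2) / a : ℕ) : ℝ) + 6 := by
        exact_mod_cast hck
      have hdivle : ((8 * (p.1 + p.2) / a : ℕ) : ℝ) ≤ (8 * (p.1 + p.2) : ℕ) / (a:ℝ) :=
        Nat.cast_div_le
      have hsumle : ((8 * (p.1 + p.2) : ℕ) : ℝ) ≤ 16 * N := by
        push_cast
        have := hpS'.1.2; have := hpS'.2.2
        have h1 : (p.1 : ℝ) ≤ N := by exact_mod_cast hpS'.1.2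
        have h2 : (p.2 : ℝ) ≤ N := by exact_mod_cast hpS'.2.2
        linarith
      have hfinal : ((8 * (p.1 + p.2) : ℕ) : ℝ) / (a:ℝ) ≤ 16 * N / (a:ℝ) := by
        apply div_le_div_of_nonneg_right hsumle (by linarith) |>.trans_eq rfl
      rw [hffa]
      have h16 : 16 * (N:ℝ) / a ≤ 16 * N * (a:ℝ)⁻¹ := by rw [div_eq_mul_inv]
      calc ((K p.1 p.2).card : ℝ) ≤ 4 * ((8 * (p.1 + p.2) / a : ℕ) : ℝ) + 6 := hcast
        _ ≤ 4 * (16 * N / (a:ℝ)) + 6 := by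
            have := hdivle.trans hfinal
            linarith
        _ = 64 * N * (a:ℝ)⁻¹ + 6 := by field_simp; ring
    calc ∑ p ∈ (I ×ˢ I).filter (fun p => ¬ bad p), ((K p.1 p.2).card : ℝ)
        ≤ ∑ p ∈ (I ×ˢ I).filter (fun p => ¬ bad p),
            (64 * N * ff (max p.1 p.2 - min p.1 p.2) + 6) := Finset.sum_le_sum hterm
      _ = ∑ p ∈ (I ×ˢ I).filter (fun p => ¬ bad p), 64 * N * ff (max p.1 p.2 - min p.1 p.2)
          + ∑ p ∈ (I ×ˢ I).filter (fun p => ¬ bad p), (6:ℝ) := Finset.sum_add_distrib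
      _ ≤ ∑ p ∈ I ×ˢ I, 64 * N * ff (max p.1 p.2 - min p.1 p.2) + 6 * (N:ℝ)^2 := by
          apply add_le_add
          · apply Finset.sum_le_sum_of_subset_of_nonneg (Finset.filter_subset _ _)
            intro p _ _
            exact mul_nonneg (by positivity) (ff_nonneg _)
          · rw [Finset.sum_const, nsmul_eq_mul]
            have h1 : (((I ×ˢ I).filter (fun p => ¬ bad p)).card : ℝ) ≤ (N:ℝ)^2 := by
              have : ((I ×ˢ I).filter (fun p => ¬ bad p)).card ≤ (I ×ˢ I).card :=
                Finset.card_le_card (Finset.filter_subset _ _)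
              have hScard : (I ×ˢ I).card = N * N := by
                rw [Finset.card_product, hI, Nat.card_Icc]
                simp
              have h2 : ((I ×ˢ I).filter (fun p => ¬ bad p)).card ≤ N * N :=
                hScard ▸ this
              calc (((I ×ˢ I).filter (fun p => ¬ bad p)).card : ℝ) ≤ ((N * N : ℕ) : ℝ) := by
                    exact_mod_cast h2
                _ = (N:ℝ)^2 := by push_cast; ring
            nlinarith [h1]
      _ ≤ 64 * N * (2 * N * (1 + Real.log N)) + 6 * (N:ℝ)^2 := by
          apply add_le_add_left
          have : ∑ p ∈ I ×ˢ I, 64 * (N:ℝ) * ff (max p.1 p.2 - min p.1 p.2)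
              = 64 * N * ∑ p ∈ I ×ˢ I, ff (max p.1 p.2 - min p.1 p.2) := by
            rw [Finset.mul_sum]
          rw [this]
          apply mul_le_mul_of_nonneg_left _ (by positivity)
          rw [Finset.sum_product]
          calc ∑ n ∈ I, ∑ m ∈ I, ff (max n m - min n m)
              ≤ ∑ n ∈ I, 2 * (1 + Real.log N) := by
                apply Finset.sum_le_sum
                intro n hn
                rw [hI, Finset.mem_Icc] at hn
                exact inner_harmonic N n hn.2
            _ = (N:ℝ) * (2 * (1 + Real.log N)) := by
                rw [Finset.sum_const, nsmul_eq_mul, hI, Nat.card_Icc]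
                norm_num
            _ = 2 * N * (1 + Real.log N) := by ring
      _ = 6 * (N:ℝ)^2 + 64 * N * (2 * N * (1 + Real.log N)) := by ring
  -- combine
  have hfin : (T.card : ℝ) ≤ 13 * (N:ℝ)^2 + 128 * (N:ℝ)^2 * (1 + Real.log N) := by
    rw [hsplit] at hE
    have : 64 * (N:ℝ) * (2 * N * (1 + Real.log N)) = 128 * (N:ℝ)^2 * (1 + Real.log N) := by
      ring
    linarith [hE, hbadsum, hgoodsum]
  exact hfin

theorem stmt11 (A : ℝ) (hA1 : 1 ≤ A) (hA2 : A ≤ 2) (ε : ℝ) (hε0 : 0 < ε) (hε1 : ε < 1) :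
    ∃ C : ℝ, 0 < C ∧
      ∀ N : ℕ, 3 ≤ N →
        (((Finset.Icc 1 N ×ˢ Finset.Icc 1 N ×ˢ Finset.Icc 1 N ×ˢ Finset.Icc 1 N).filter
            fun q => q.1 + q.2.1 = q.2.2.1 + q.2.2.2 ∧
              ⌊(q.1 : ℝ) * Real.log q.1 ^ A⌋ + ⌊(q.2.1 : ℝ) * Real.log q.2.1 ^ A⌋ =
                ⌊(q.2.2.1 : ℝ) * Real.log q.2.2.1 ^ A⌋ +
                  ⌊(q.2.2.2 : ℝ) * Real.log q.2.2.2 ^ A⌋).card : ℝ) ≤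
          C * (N : ℝ) ^ ((2 : ℝ) + ε) * Real.log N ^ ((2 : ℝ) - A) := by
  refine ⟨269 / ε, by positivity, ?_⟩
  intro N hN
  have hmc := main_count A hA1 N hN
  have hN3 : (3:ℝ) ≤ (N:ℝ) := by exact_mod_cast hN
  have hN0 : (0:ℝ) < N := by linarith
  have hlog1 : 1 ≤ Real.log N := by
    rw [Real.le_log_iff_exp_le hN0]
    have := Real.exp_one_lt_d9
    linarith
  have h1 : 13*(N:ℝ)^2 + 128*(N:ℝ)^2*(1+Real.log N) ≤ 269 * (N:ℝ)^2 * Real.log N := by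
    nlinarith [sq_nonneg (N:ℝ), mul_nonneg (sq_nonneg (N:ℝ)) (by linarith : (0:ℝ) ≤ Real.log N - 1)]
  have hrp : (0:ℝ) < (N:ℝ)^ε := Real.rpow_pos_of_pos hN0 ε
  have hlogN : Real.log N ≤ (N:ℝ)^ε / ε := by
    have h2 : Real.log ((N:ℝ)^ε) ≤ (N:ℝ)^ε - 1 :=
      Real.log_le_sub_one_of_pos hrp
    rw [Real.log_rpow hN0] at h2
    rw [le_div_iff₀ hε0]
    nlinarith
  have hone : 1 ≤ Real.log N ^ ((2:ℝ) - A) := by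
    simpa using Real.rpow_le_rpow_of_exponent_le hlog1 (by linarith : (0:ℝ) ≤ 2 - A)
  have hsplit : (N:ℝ) ^ ((2:ℝ)+ε) = (N:ℝ)^2 * (N:ℝ)^ε := by
    rw [Real.rpow_add hN0]
    norm_num [Real.rpow_two]
  calc _ ≤ 13*(N:ℝ)^2 + 128*(N:ℝ)^2*(1+Real.log N) := hmc
    _ ≤ 269 * (N:ℝ)^2 * Real.log N := h1
    _ ≤ 269 * (N:ℝ)^2 * ((N:ℝ)^ε/ε) :=
        mul_le_mul_of_nonneg_left hlogN (by positivity)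
    _ = 269/ε * ((N:ℝ)^2 * (N:ℝ)^ε) := by ring
    _ = 269/ε * (N:ℝ)^((2:ℝ)+ε) := by rw [hsplit]
    _ ≤ 269/ε * (N:ℝ)^((2:ℝ)+ε) * Real.log N ^ ((2:ℝ)-A) :=
        le_mul_of_one_le_right (by positivity) hone
end

section
/- Let d ≥ 2 be an integer, let (a_n^{(1)}), …, (a_n^{(d)}) be strictly increasing sequences of positive integers, let s > 0 be real, and let N be a positive integer with N ≥ (2s)^d. For α = (α₁,…,α_d) ∈ ℝ^d define R_{2,2}^{(d)}(s,α,N) = (1/N)·#{(m,n) : 1 ≤ m ≠ n ≤ N, ( Σ_{i=1}^d ‖α_i·(a_m^{(i)} − a_n^{(i)})‖² )^{1/2} ≤ s·N^{−1/d}}. Then ∫_{[0,1)^d} R_{2,2}^{(d)}(s,α,N) dα = ω_d·s^d·(N−1)/N, where ω_d is the Lebesgue volume of the Euclidean unit ball in ℝ^d. -/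
open MeasureTheory
open scoped Classical

/-- Distance from a real number to the nearest integer. -/
noncomputable def nidist (x : ℝ) : ℝ := |x - (round x : ℝ)|

/-- Pair correlation statistic `R_{2,2}^{(d)}(s, α, N)` with respect to the Euclidean norm. -/
noncomputable def R2twoA (d : ℕ) (a : Fin d → ℕ → ℕ) (s : ℝ) (N : ℕ) (α : Fin d → ℝ) : ℝ :=
  (((Finset.Icc 1 N ×ˢ Finset.Icc 1 N).filter fun p =>
      p.1 ≠ p.2 ∧ Real.sqrt (∑ i, nidist (α i * ((a i p.1 : ℝ) - (a i p.2 : ℝ))) ^ 2) ≤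
        s / (N : ℝ) ^ ((1 : ℝ) / d)).card : ℝ) / N

namespace Stmt16Aux

open Set

lemma measurable_round_real : Measurable fun x : ℝ => (round x : ℝ) := by
  have h : (fun x : ℝ => (round x : ℝ)) = (fun z : ℤ => (z : ℝ)) ∘ fun x : ℝ => ⌊x + 1 / 2⌋ := by
    funext x; simp [round_eq]
  rw [h]
  exact measurable_from_top.comp (measurable_id.add_const _).floor

lemma measurable_nidist : Measurable nidist :=
  (measurable_id.sub measurable_round_real).abs

lemma nidist_eq_norm (x : ℝ) : nidist x = ‖(x : AddCircle (1 : ℝ))‖ := by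
  rw [AddCircle.norm_eq]
  simp [nidist]

lemma sq_nidist_of_mem {x : ℝ} (hx : x ∈ Set.Ioc (-(1/2) : ℝ) (1/2)) :
    nidist x ^ 2 = x ^ 2 := by
  rcases eq_or_lt_of_le hx.2 with h | h
  · rw [h]
    norm_num [nidist, round_eq]
  · have h0 : round x = 0 := round_eq_zero_iff.2 ⟨hx.1.le, h⟩
    rw [nidist, h0]
    simp [sq_abs]

lemma sqrt_le_iff_sq {A r : ℝ} (hA : 0 ≤ A) (hr : 0 ≤ r) :
    Real.sqrt A ≤ r ↔ A ≤ r ^ 2 := by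
  constructor
  · intro h
    calc A = Real.sqrt A ^ 2 := (Real.sq_sqrt hA).symm
    _ ≤ r ^ 2 := pow_le_pow_left₀ (Real.sqrt_nonneg A) h 2
  · intro h
    calc Real.sqrt A ≤ Real.sqrt (r ^ 2) := Real.sqrt_le_sqrt h
    _ = r := by rw [Real.sqrt_sq hr]

lemma measurePreserving_piMap {ι : Type*} [Fintype ι] {α β : ι → Type*}
    [∀ i, MeasurableSpace (α i)] [∀ i, MeasurableSpace (β i)]
    (μ : ∀ i, Measure (α i)) (ν : ∀ i, Measure (β i))
    [∀ i, SigmaFinite (μ i)] [∀ i, SigmaFinite (ν i)]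
    {f : ∀ i, α i → β i} (hf : ∀ i, MeasurePreserving (f i) (μ i) (ν i)) :
    MeasurePreserving (fun (x : ∀ i, α i) i => f i (x i)) (Measure.pi μ) (Measure.pi ν) := by
  have hmeas : Measurable fun (x : ∀ i, α i) i => f i (x i) :=
    measurable_pi_lambda _ fun i => (hf i).measurable.comp (measurable_pi_apply i)
  refine ⟨hmeas, ?_⟩
  refine (Measure.pi_eq fun t ht => ?_).symm
  rw [Measure.map_apply hmeas (MeasurableSet.univ_pi ht)]
  have hpre : (fun (x : ∀ i, α i) i => f i (x i)) ⁻¹' Set.pi Set.univ t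
      = Set.pi Set.univ fun i => f i ⁻¹' t i := by
    ext x; simp
  rw [hpre, Measure.pi_pi]
  refine Finset.prod_congr rfl fun i _ => ?_
  rw [← (hf i).map_eq, Measure.map_apply (hf i).measurable (ht i)]

lemma pi_restrict {ι : Type*} [Fintype ι] (t : ι → Set ℝ) (ht : ∀ i, MeasurableSet (t i)) :
    Measure.pi (fun i : ι => (volume : Measure ℝ).restrict (t i)) =
      (volume : Measure (ι → ℝ)).restrict (Set.pi Set.univ t) := by
  refine Measure.pi_eq fun s hs => ?_
  rw [Measure.restrict_apply (MeasurableSet.univ_pi hs), ← Set.pi_inter_distrib, volume_pi,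
    Measure.pi_pi]
  exact Finset.prod_congr rfl fun i _ => (Measure.restrict_apply (hs i)).symm

lemma mp_coord (k : ℤ) (hk : k ≠ 0) :
    MeasurePreserving (fun x : ℝ => (((k : ℝ) * x : ℝ) : AddCircle (1 : ℝ)))
      (volume.restrict (Set.Ico (0 : ℝ) 1)) volume := by
  haveI : Fact ((0 : ℝ) < 1) := ⟨one_pos⟩
  have h1 : MeasurePreserving ((↑) : ℝ → AddCircle (1 : ℝ))
      (volume.restrict (Set.Ico (0 : ℝ) 1)) volume := by
    have h := AddCircle.measurePreserving_mk (T := 1) 0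
    rw [zero_add] at h
    rwa [Measure.restrict_congr_set Ico_ae_eq_Ioc]
  have h2 : MeasurePreserving (fun y : AddCircle (1 : ℝ) => k • y) volume volume :=
    Measure.measurePreserving_zsmul volume hk
  have hfun : (fun x : ℝ => (((k : ℝ) * x : ℝ) : AddCircle (1 : ℝ)))
      = (fun y : AddCircle (1 : ℝ) => k • y) ∘ ((↑) : ℝ → AddCircle (1 : ℝ)) := by
    funext x
    simp only [Function.comp_apply]
    rw [← AddCircle.coe_zsmul]
    congr 1
    rw [zsmul_eq_mul]
  rw [hfun]
  exact h2.comp h1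

lemma mp_mk : MeasurePreserving ((↑) : ℝ → AddCircle (1 : ℝ))
    (volume.restrict (Set.Ioc (-(1/2) : ℝ) (1/2))) volume := by
  haveI : Fact ((0 : ℝ) < 1) := ⟨one_pos⟩
  have h := AddCircle.measurePreserving_mk (T := 1) (-(1/2))
  rw [show (-(1/2 : ℝ) + 1) = 1/2 by norm_num] at h
  exact h

lemma key_measure (d : ℕ) (k : Fin d → ℤ) (hk : ∀ i, k i ≠ 0)
    {r : ℝ} (hr0 : 0 ≤ r) (hr : r ≤ 1 / 2) :
    volume ({α : Fin d → ℝ | ∑ i, nidist ((k i : ℝ) * α i) ^ 2 ≤ r ^ 2}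
        ∩ Set.pi Set.univ fun _ : Fin d => Set.Ico (0 : ℝ) 1) =
      ENNReal.ofReal (r ^ d) * volume (Metric.ball (0 : EuclideanSpace ℝ (Fin d)) 1) := by
  haveI : Fact ((0 : ℝ) < 1) := ⟨one_pos⟩
  set C := AddCircle (1 : ℝ)
  have hnormC : Measurable fun y : C => ‖y‖ := continuous_norm.measurable
  set S' : Set (Fin d → C) := {y | ∑ i, ‖y i‖ ^ 2 ≤ r ^ 2} with hS'
  have hS'm : MeasurableSet S' := by
    apply measurableSet_le _ measurable_const
    exact Finset.measurable_sum _ fun i _ =>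
      ((hnormC.comp (measurable_pi_apply i)).pow_const 2)
  -- Step A : transfer to the product of circles
  have hΦ : MeasurePreserving (fun (α : Fin d → ℝ) i => (((k i : ℝ) * α i : ℝ) : C))
      (volume.restrict (Set.pi Set.univ fun _ : Fin d => Set.Ico (0:ℝ) 1))
      (Measure.pi fun _ : Fin d => (volume : Measure C)) := by
    have h := measurePreserving_piMap (fun _ : Fin d => volume.restrict (Set.Ico (0:ℝ) 1))
      (fun _ : Fin d => (volume : Measure C)) (fun i => mp_coord (k i) (hk i))
    rwa [pi_restrict _ (fun _ => measurableSet_Ico)] at h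
  have hA : volume ({α : Fin d → ℝ | ∑ i, nidist ((k i : ℝ) * α i) ^ 2 ≤ r ^ 2}
        ∩ Set.pi Set.univ fun _ : Fin d => Set.Ico (0:ℝ) 1)
      = (Measure.pi fun _ : Fin d => (volume : Measure C)) S' := by
    rw [← hΦ.measure_preimage hS'm.nullMeasurableSet,
      Measure.restrict_apply (hΦ.measurable hS'm)]
    congr 1
    ext α
    have hrw : (∑ i, nidist ((k i : ℝ) * α i) ^ 2)
        = ∑ i, ‖((((k i : ℝ) * α i : ℝ)) : C)‖ ^ 2 :=
      Finset.sum_congr rfl fun i _ => by rw [nidist_eq_norm]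
    simp only [Set.mem_inter_iff, Set.mem_preimage, hS', Set.mem_setOf_eq, hrw]
    exact Iff.rfl
  -- Step B : transfer back to the centered cube
  have hΨ : MeasurePreserving (fun (x : Fin d → ℝ) i => ((x i : ℝ) : C))
      (volume.restrict (Set.pi Set.univ fun _ : Fin d => Set.Ioc (-(1/2):ℝ) (1/2)))
      (Measure.pi fun _ : Fin d => (volume : Measure C)) := by
    have h := measurePreserving_piMap (fun _ : Fin d => volume.restrict (Set.Ioc (-(1/2):ℝ) (1/2)))
      (fun _ : Fin d => (volume : Measure C)) (fun _ => mp_mk)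
    rwa [pi_restrict _ (fun _ => measurableSet_Ioc)] at h
  have hB : (Measure.pi fun _ : Fin d => (volume : Measure C)) S'
      = volume (((fun (x : Fin d → ℝ) i => ((x i : ℝ) : C)) ⁻¹' S')
          ∩ (Set.pi Set.univ fun _ : Fin d => Set.Ioc (-(1/2):ℝ) (1/2))) := by
    rw [← hΨ.measure_preimage hS'm.nullMeasurableSet,
      Measure.restrict_apply (hΨ.measurable hS'm)]
  -- Step C : identify with the Euclidean ball
  set B : Set (Fin d → ℝ) := {x | ∑ i, (x i) ^ 2 ≤ r ^ 2} with hBdef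
  have hBm : MeasurableSet B := measurableSet_le (Finset.measurable_sum _ fun i _ =>
    (measurable_pi_apply i).pow_const 2) measurable_const
  have hC1 : ((fun (x : Fin d → ℝ) i => ((x i : ℝ) : C)) ⁻¹' S')
      ∩ (Set.pi Set.univ fun _ : Fin d => Set.Ioc (-(1/2):ℝ) (1/2))
      = B ∩ (Set.pi Set.univ fun _ : Fin d => Set.Ioc (-(1/2):ℝ) (1/2)) := by
    ext x
    by_cases hx : ∀ i, x i ∈ Set.Ioc (-(1/2):ℝ) (1/2)
    · have hsum : ∑ i, ‖((x i : ℝ) : C)‖ ^ 2 = ∑ i, (x i) ^ 2 :=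
        Finset.sum_congr rfl fun i _ => by rw [← nidist_eq_norm, sq_nidist_of_mem (hx i)]
      have hx' : x ∈ (Set.pi Set.univ fun _ : Fin d => Set.Ioc (-(1/2):ℝ) (1/2)) :=
        Set.mem_univ_pi.2 hx
      simp only [Set.mem_inter_iff, hx', and_true, Set.mem_preimage, hS', Set.mem_setOf_eq,
        hBdef, hsum]
      change ∑ i, ‖((x i : ℝ) : C)‖ ^ 2 ≤ r ^ 2 ↔ _
      rw [hsum]
    · have hx' : ¬ x ∈ (Set.pi Set.univ fun _ : Fin d => Set.Ioc (-(1/2):ℝ) (1/2)) := by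
        rw [Set.mem_univ_pi]; exact hx
      exact iff_of_false (fun h => hx' h.2) (fun h => hx' h.2)
  have hC2 : volume (B ∩ (Set.pi Set.univ fun _ : Fin d => Set.Ioc (-(1/2):ℝ) (1/2)))
      = volume B := by
    have hcube : MeasurableSet (Set.pi Set.univ fun _ : Fin d => Set.Ioc (-(1/2):ℝ) (1/2)) :=
      MeasurableSet.univ_pi fun _ => measurableSet_Ioc
    have hdiff : volume (B \ (Set.pi Set.univ fun _ : Fin d => Set.Ioc (-(1/2):ℝ) (1/2))) = 0 := by
      have hsub : B \ (Set.pi Set.univ fun _ : Fin d => Set.Ioc (-(1/2):ℝ) (1/2))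
          ⊆ ⋃ i, {x : Fin d → ℝ | x i = -(1/2)} := by
        rintro x ⟨hxB, hxc⟩
        rw [Set.mem_univ_pi] at hxc
        push_neg at hxc
        obtain ⟨i, hi⟩ := hxc
        have h1 : (x i) ^ 2 ≤ r ^ 2 :=
          le_trans (Finset.single_le_sum (f := fun j => (x j) ^ 2)
            (fun j _ => sq_nonneg _) (Finset.mem_univ i)) hxB
        have hx1 : -(1/2 : ℝ) ≤ x i := by nlinarith
        have hx2 : x i ≤ (1/2 : ℝ) := by nlinarith
        have hxeq : x i = -(1/2) := by
          rw [Set.mem_Ioc] at hi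
          rcases not_and_or.1 hi with h | h
          · push_neg at h
            linarith
          · exact absurd hx2 h
        exact Set.mem_iUnion.2 ⟨i, hxeq⟩
      refine measure_mono_null hsub (measure_iUnion_null fun i => ?_)
      have h := Measure.pi_hyperplane (fun _ : Fin d => (volume : Measure ℝ)) i (-(1/2) : ℝ)
      simpa [volume_pi] using h
    have h := measure_inter_add_diff (μ := (volume : Measure (Fin d → ℝ))) B hcube
    rw [hdiff, add_zero] at h
    exact h
  -- Step D : compute the volume of the Euclidean ball
  have hD : volume B = volume (Metric.closedBall (0 : EuclideanSpace ℝ (Fin d)) r) := by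
    have hmp := EuclideanSpace.volume_preserving_symm_measurableEquiv_toLp (Fin d)
    rw [← hmp.measure_preimage hBm.nullMeasurableSet]
    congr 1
    ext y
    simp only [Set.mem_preimage, Metric.mem_closedBall, dist_zero_right, hBdef, Set.mem_setOf_eq]
    rw [EuclideanSpace.norm_eq,
      sqrt_le_iff_sq (Finset.sum_nonneg fun i _ => sq_nonneg _) hr0]
    constructor <;> intro h <;>
      · refine le_trans (le_of_eq (Finset.sum_congr rfl fun i _ => ?_)) h
        simp [MeasurableEquiv.toLp_symm_apply, Real.norm_eq_abs, sq_abs]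
  rw [hA, hB, hC1, hC2, hD, Measure.addHaar_closedBall _ _ hr0, finrank_euclideanSpace_fin]

end Stmt16Aux

theorem stmt16 (d : ℕ) (hd : 2 ≤ d) (a : Fin d → ℕ → ℕ)
    (hmono : ∀ i, StrictMono (a i)) (hpos : ∀ i n, 0 < a i n)
    (s : ℝ) (hs : 0 < s) (N : ℕ) (hN0 : 0 < N) (hN : (2 * s) ^ d ≤ (N : ℝ)) :
    ∫ α in Set.univ.pi fun _ : Fin d => Set.Ico (0 : ℝ) 1,
        R2twoA d a s N α =
      (volume (Metric.ball (0 : EuclideanSpace ℝ (Fin d)) 1)).toReal * s ^ d *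
        ((N : ℝ) - 1) / N := by
  classical
  have hd0 : d ≠ 0 := by omega
  have hdR : ((d : ℝ)) ≠ 0 := Nat.cast_ne_zero.2 hd0
  have hN0' : (0 : ℝ) < N := Nat.cast_pos.2 hN0
  set r : ℝ := s / (N : ℝ) ^ ((1 : ℝ) / d) with hrdef
  have hNpow_pos : 0 < (N : ℝ) ^ ((1 : ℝ) / d) := Real.rpow_pos_of_pos hN0' _
  have hNpow : ((N : ℝ) ^ ((1 : ℝ) / d)) ^ d = N := by
    rw [← Real.rpow_natCast ((N : ℝ) ^ ((1 : ℝ) / d)) d, ← Real.rpow_mul hN0'.le, one_div,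
      inv_mul_cancel₀ hdR, Real.rpow_one]
  have hr0 : 0 < r := div_pos hs hNpow_pos
  have h2s : 2 * s ≤ (N : ℝ) ^ ((1 : ℝ) / d) := by
    have h := Real.rpow_le_rpow (by positivity) hN (by positivity : (0 : ℝ) ≤ 1 / d)
    rwa [← Real.rpow_natCast (2 * s) d, ← Real.rpow_mul (by positivity), mul_one_div,
      div_self hdR, Real.rpow_one] at h
  have hrhalf : r ≤ 1 / 2 := by
    rw [hrdef, div_le_div_iff₀ hNpow_pos two_pos]
    linarith
  have hrd : r ^ d = s ^ d / N := by rw [hrdef, div_pow, hNpow]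
  set ω : ℝ := (volume (Metric.ball (0 : EuclideanSpace ℝ (Fin d)) 1)).toReal with hω
  set cube : Set (Fin d → ℝ) := Set.pi Set.univ fun _ : Fin d => Set.Ico (0 : ℝ) 1 with hcube
  have hcubem : MeasurableSet cube := MeasurableSet.univ_pi fun _ => measurableSet_Ico
  haveI : IsFiniteMeasure (volume.restrict cube) := by
    constructor
    rw [Measure.restrict_apply_univ, hcube, volume_pi, Measure.pi_pi]
    simp [Real.volume_Ico]
  set P : Finset (ℕ × ℕ) := Finset.Icc 1 N ×ˢ Finset.Icc 1 N with hP
  have hFm : ∀ p : ℕ × ℕ, Measurable fun α : Fin d → ℝ =>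
      ∑ i, nidist (α i * ((a i p.1 : ℝ) - (a i p.2 : ℝ))) ^ 2 := fun p =>
    Finset.measurable_sum _ fun i _ =>
      ((Stmt16Aux.measurable_nidist.comp ((measurable_pi_apply i).mul_const _)).pow_const 2)
  set T : ℕ × ℕ → Set (Fin d → ℝ) := fun p =>
    {α | Real.sqrt (∑ i, nidist (α i * ((a i p.1 : ℝ) - (a i p.2 : ℝ))) ^ 2) ≤ r} with hT
  have hTm : ∀ p, MeasurableSet (T p) := fun p =>
    measurableSet_le (Real.continuous_sqrt.measurable.comp (hFm p)) measurable_const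
  have hstep1 : ∀ α : Fin d → ℝ, R2twoA d a s N α
      = (∑ p ∈ P, if p.1 ≠ p.2 then (if α ∈ T p then (1 : ℝ) else 0) else 0) / N := by
    intro α
    rw [R2twoA, Finset.card_filter]
    push_cast
    congr 1
    refine Finset.sum_congr rfl fun p _ => ?_
    rw [ite_and]
    congr 1
  have hint : ∀ p ∈ P, IntegrableOn
      (fun α => if p.1 ≠ p.2 then (if α ∈ T p then (1 : ℝ) else 0) else 0) cube volume := by
    intro p _
    by_cases hp' : p.1 = p.2
    · simp only [hp', ne_eq, not_true_eq_false, if_false]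
      exact integrableOn_zero
    · simp only [ne_eq, hp', not_false_eq_true, if_true]
      have hind : (fun α => if α ∈ T p then (1 : ℝ) else 0)
          = Set.indicator (T p) (fun _ => (1 : ℝ)) := by
        funext α; simp [Set.indicator_apply]
      rw [hind]
      exact (integrable_const (1 : ℝ)).indicator (hTm p)
  have hval : ∀ p ∈ P, (∫ α in cube, (if p.1 ≠ p.2 then (if α ∈ T p then (1 : ℝ) else 0) else 0))
      = if p.1 ≠ p.2 then r ^ d * ω else 0 := by
    intro p _
    by_cases hp' : p.1 = p.2
    · simp [hp']
    · simp only [ne_eq, hp', not_false_eq_true, if_true]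
      have hind : (fun α => if α ∈ T p then (1 : ℝ) else 0)
          = Set.indicator (T p) (fun _ => (1 : ℝ)) := by
        funext α; simp [Set.indicator_apply]
      rw [hind]
      have h1 : (∫ α in cube, Set.indicator (T p) (fun _ => (1 : ℝ)) α)
          = ((volume.restrict cube) (T p)).toReal := by
        have := MeasureTheory.integral_indicator_one (μ := volume.restrict cube) (hTm p)
        exact this
      rw [h1, Measure.restrict_apply (hTm p)]
      set k : Fin d → ℤ := fun i => (a i p.1 : ℤ) - (a i p.2 : ℤ) with hkdef
      have hk : ∀ i, k i ≠ 0 := by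
        intro i
        refine sub_ne_zero.2 fun hcon => hp' ((hmono i).injective ?_)
        exact_mod_cast hcon
      have hsetvol : T p ∩ cube
          = {α : Fin d → ℝ | ∑ i, nidist ((k i : ℝ) * α i) ^ 2 ≤ r ^ 2} ∩ cube := by
        apply congrArg (· ∩ cube)
        ext α
        have hFrw : (∑ i, nidist (α i * ((a i p.1 : ℝ) - (a i p.2 : ℝ))) ^ 2)
            = ∑ i, nidist ((k i : ℝ) * α i) ^ 2 :=
          Finset.sum_congr rfl fun i _ => by
            congr 1
            congr 1
            push_cast [hkdef]
            ring
        simp only [hT, Set.mem_setOf_eq]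
        rw [hFrw, Stmt16Aux.sqrt_le_iff_sq (Finset.sum_nonneg fun i _ => sq_nonneg _) hr0.le]
      rw [hsetvol, hcube, Stmt16Aux.key_measure d k hk hr0.le hrhalf,
        ENNReal.toReal_mul, ENNReal.toReal_ofReal (by positivity)]
  have hcard : (P.filter fun p => p.1 ≠ p.2).card = N * N - N := by
    have hPd : (P.filter fun p => p.1 ≠ p.2) = (Finset.Icc 1 N).offDiag := by
      ext q
      simp [Finset.mem_offDiag, Finset.mem_filter, Finset.mem_product, hP, and_assoc]
    rw [hPd, Finset.offDiag_card, Nat.card_Icc]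
    simp
  calc (∫ α in cube, R2twoA d a s N α)
      = ∫ α in cube,
          (∑ p ∈ P, if p.1 ≠ p.2 then (if α ∈ T p then (1 : ℝ) else 0) else 0) / N := by
        simp only [hstep1]
    _ = (∫ α in cube,
          ∑ p ∈ P, if p.1 ≠ p.2 then (if α ∈ T p then (1 : ℝ) else 0) else 0) / N := by
        rw [integral_div]
    _ = (∑ p ∈ P, ∫ α in cube,
          if p.1 ≠ p.2 then (if α ∈ T p then (1 : ℝ) else 0) else 0) / N := by
        rw [integral_finset_sum P hint]
    _ = (∑ p ∈ P, if p.1 ≠ p.2 then r ^ d * ω else 0) / N := by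
        rw [Finset.sum_congr rfl hval]
    _ = (((N * N - N : ℕ) : ℝ) * (r ^ d * ω)) / N := by
        rw [← Finset.sum_filter, Finset.sum_const, nsmul_eq_mul, hcard]
    _ = ω * s ^ d * ((N : ℝ) - 1) / N := by
        have hle : N ≤ N * N := Nat.le_mul_of_pos_left N hN0
        rw [Nat.cast_sub hle, hrd]
        push_cast
        field_simp
end
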